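/- arXiv:2408.03666 — 5 statements merged into one kernel-verified Lean document; each statement's English description precedes it below -/
import Mathlib

section
/- Let G₁ and G₂ be finite groups. Then H²(G₁ × G₂, ℂˣ) is isomorphic to H²(G₁, ℂˣ) × H²(G₂, ℂˣ) × Hom(G₁^{ab} ⊗_ℤ G₂^{ab}, ℂˣ), where G^{ab} = G/G' denotes the abelianization. -/
/-- The multiplicative 2-cocycle condition for `α : G → G → ℂˣ` (trivial action). -/
def IsCocycle {G : Type*} [Group G] (α : G → G → ℂˣ) : Prop :=
  ∀ g h k : G, α g h * α (g * h) k = α h k * α g (h * k)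

/-- `A` is a twisted group algebra `ℂ^α G`: it has a `ℂ`-basis indexed by `G`
with multiplication of basis elements twisted by `α`. -/
def IsTwistedGroupAlgebra (G : Type*) [Group G] (α : G → G → ℂˣ)
    (A : Type*) [Ring A] [Algebra ℂ A] : Prop :=
  ∃ b : Module.Basis G ℂ A, ∀ g h : G, b g * b h = (α g h : ℂ) • b (g * h)

/-- The group of 2-cocycles of `G` with values in `ℂˣ` (trivial action). -/
def Z2 (G : Type*) [Group G] : Subgroup (G → G → ℂˣ) where
  carrier := {α | IsCocycle α}
  one_mem' := by intro g h k; simp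
  mul_mem' := by
    intro a b ha hb g h k
    simp only [Pi.mul_apply]
    rw [mul_mul_mul_comm, ha g h k, hb g h k, mul_mul_mul_comm]
  inv_mem' := by
    intro a ha g h k
    simp only [Pi.inv_apply]
    rw [← mul_inv, ha g h k, mul_inv]

/-- The coboundary map `(G → ℂˣ) →* (G → G → ℂˣ)`. -/
def B2hom (G : Type*) [Group G] : (G → ℂˣ) →* (G → G → ℂˣ) where
  toFun μ := fun g h => μ g * μ h * (μ (g * h))⁻¹
  map_one' := by funext g h; simp
  map_mul' μ ν := by
    funext g h
    simp only [Pi.mul_apply, mul_inv]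
    ac_rfl

/-- The group of 2-coboundaries. -/
def B2 (G : Type*) [Group G] : Subgroup (G → G → ℂˣ) := (B2hom G).range

/-- The second cohomology group `H²(G, ℂˣ)` with trivial action (Schur multiplier). -/
abbrev H2 (G : Type*) [Group G] := ↥(Z2 G) ⧸ ((B2 G).comap (Z2 G).subtype)

/-! ### Auxiliary material -/

section Basic

variable {G : Type*} [Group G] {α : G → G → ℂˣ}

theorem mem_Z2_iff : α ∈ Z2 G ↔ IsCocycle α := Iff.rfl

theorem B2hom_apply (μ : G → ℂˣ) (g h : G) :
    B2hom G μ g h = μ g * μ h * (μ (g * h))⁻¹ := rfl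

theorem cocycle_one_right (hα : IsCocycle α) (g : G) : α g 1 = α 1 1 := by
  have := hα g 1 1
  simp only [mul_one, one_mul] at this
  exact mul_right_cancel this

theorem cocycle_one_left (hα : IsCocycle α) (k : G) : α 1 k = α 1 1 := by
  have := hα 1 1 k
  simp only [mul_one, one_mul] at this
  rw [mul_comm (α 1 1) (α 1 k)] at this
  exact (mul_left_cancel this).symm

theorem const_mem_B2 (c : ℂˣ) : (fun _ _ => c : G → G → ℂˣ) ∈ B2 G := by
  refine ⟨fun _ => c, ?_⟩
  funext g h
  simp [B2hom_apply]

end Basic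

section ProdIds

variable {G₁ G₂ : Type*} [Group G₁] [Group G₂] {α : G₁ × G₂ → G₁ × G₂ → ℂˣ}

/-- Restriction of a 2-cochain on `G₁ × G₂` to the first factor. -/
def res1 (α : G₁ × G₂ → G₁ × G₂ → ℂˣ) : G₁ → G₁ → ℂˣ := fun g h => α (g, 1) (h, 1)

/-- Restriction of a 2-cochain on `G₁ × G₂` to the second factor. -/
def res2 (α : G₁ × G₂ → G₁ × G₂ → ℂˣ) : G₂ → G₂ → ℂˣ := fun g h => α (1, g) (1, h)

/-- The pairing `G₁ → G₂ → ℂˣ` associated to a 2-cochain on `G₁ × G₂`. -/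
def bta (α : G₁ × G₂ → G₁ × G₂ → ℂˣ) (g : G₁) (y : G₂) : ℂˣ :=
  α (1, y) (g, 1) / α (g, 1) (1, y)

theorem IsCocycle.res1 (hα : IsCocycle α) : IsCocycle (res1 α) := by
  intro g h k
  have := hα (g, 1) (h, 1) (k, 1)
  simpa only [Prod.mk_mul_mk, mul_one, _root_.res1] using this

theorem IsCocycle.res2 (hα : IsCocycle α) : IsCocycle (res2 α) := by
  intro g h k
  have := hα (1, g) (1, h) (1, k)
  simpa only [Prod.mk_mul_mk, one_mul, _root_.res2] using this

theorem bta_mul (a b : G₁ × G₂ → G₁ × G₂ → ℂˣ) (g : G₁) (y : G₂) :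
    bta (a * b) g y = bta a g y * bta b g y := by
  simp only [bta, Pi.mul_apply]
  rw [mul_div_mul_comm]

theorem bta_one (g : G₁) (y : G₂) : bta (1 : G₁ × G₂ → G₁ × G₂ → ℂˣ) g y = 1 := by
  simp [bta]

theorem bta_one_left (hα : IsCocycle α) (y : G₂) : bta α 1 y = 1 := by
  have h1 : ((1 : G₁), y) = ((1 : G₁ × G₂) * (1, y)) := by simp
  simp only [bta]
  rw [show ((1 : G₁), (1 : G₂)) = (1 : G₁ × G₂) from rfl]
  rw [cocycle_one_right hα (1, y), cocycle_one_left hα (1, y), div_self']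

theorem bta_one_right (hα : IsCocycle α) (g : G₁) : bta α g 1 = 1 := by
  simp only [bta]
  rw [show ((1 : G₁), (1 : G₂)) = (1 : G₁ × G₂) from rfl]
  rw [cocycle_one_right hα (g, 1), cocycle_one_left hα (g, 1), div_self']

theorem bimult_left (hα : IsCocycle α) (h h' : G₁) (y : G₂) :
    α (1,y) (h*h',1) * (α (h,1) (1,y) * α (h',1) (1,y))
    = α (1,y) (h,1) * α (1,y) (h',1) * α (h*h',1) (1,y) := by
  have A := hα (1,y) (h,1) (h',1)
  have B := hα (h,1) (1,y) (h',1)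
  have C := hα (h,1) (h',1) (1,y)
  simp only [Prod.mk_mul_mk, one_mul, mul_one] at A B C
  apply mul_right_cancel
    (b := α (h,y) (h',1) * α (h,1) (h',y) * α (h,1) (h',1))
  calc α (1,y) (h*h',1) * (α (h,1) (1,y) * α (h',1) (1,y)) *
        (α (h,y) (h',1) * α (h,1) (h',y) * α (h,1) (h',1))
      = α (1,y) (h*h',1) * α (h',1) (1,y) * α (h,1) (h',1) * α (h,1) (h',y) *
        (α (h,1) (1,y) * α (h,y) (h',1)) := by ac_rfl
    _ = α (1,y) (h*h',1) * α (h',1) (1,y) * α (h,1) (h',1) * α (h,1) (h',y) *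
        (α (1,y) (h',1) * α (h,1) (h',y)) := by rw [B]
    _ = α (1,y) (h*h',1) * α (h,1) (h',1) * α (1,y) (h',1) * α (h,1) (h',y) *
        (α (h',1) (1,y) * α (h,1) (h',y)) := by ac_rfl
    _ = α (1,y) (h*h',1) * α (h,1) (h',1) * α (1,y) (h',1) * α (h,1) (h',y) *
        (α (h,1) (h',1) * α (h*h',1) (1,y)) := by rw [← C]
    _ = α (1,y) (h',1) * α (h,1) (h',y) * α (h*h',1) (1,y) * α (h,1) (h',1) *
        (α (h,1) (h',1) * α (1,y) (h*h',1)) := by ac_rfl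
    _ = α (1,y) (h',1) * α (h,1) (h',y) * α (h*h',1) (1,y) * α (h,1) (h',1) *
        (α (1,y) (h,1) * α (h,y) (h',1)) := by rw [← A]
    _ = α (1,y) (h,1) * α (1,y) (h',1) * α (h*h',1) (1,y) *
        (α (h,y) (h',1) * α (h,1) (h',y) * α (h,1) (h',1)) := by ac_rfl

theorem bimult_right (hα : IsCocycle α) (h : G₁) (y y' : G₂) :
    α (1,y*y') (h,1) * (α (h,1) (1,y) * α (h,1) (1,y'))
    = α (1,y) (h,1) * α (1,y') (h,1) * α (h,1) (1,y*y') := by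
  have A := hα (1,y) (1,y') (h,1)
  have B := hα (1,y) (h,1) (1,y')
  have C := hα (h,1) (1,y) (1,y')
  simp only [Prod.mk_mul_mk, one_mul, mul_one] at A B C
  apply mul_right_cancel
    (b := α (1,y) (h,y') * α (h,y) (1,y') * α (1,y) (1,y'))
  calc α (1,y*y') (h,1) * (α (h,1) (1,y) * α (h,1) (1,y')) *
        (α (1,y) (h,y') * α (h,y) (1,y') * α (1,y) (1,y'))
      = α (1,y*y') (h,1) * α (h,1) (1,y') * α (1,y) (h,y') * α (1,y) (1,y') *
        (α (h,1) (1,y) * α (h,y) (1,y')) := by ac_rfl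
    _ = α (1,y*y') (h,1) * α (h,1) (1,y') * α (1,y) (h,y') * α (1,y) (1,y') *
        (α (1,y) (1,y') * α (h,1) (1,y*y')) := by rw [C]
    _ = α (h,1) (1,y') * α (1,y) (h,y') * α (h,1) (1,y*y') * α (1,y) (1,y') *
        (α (1,y) (1,y') * α (1,y*y') (h,1)) := by ac_rfl
    _ = α (h,1) (1,y') * α (1,y) (h,y') * α (h,1) (1,y*y') * α (1,y) (1,y') *
        (α (1,y') (h,1) * α (1,y) (h,y')) := by rw [A]
    _ = α (1,y) (h,y') * α (h,1) (1,y*y') * α (1,y) (1,y') * α (1,y') (h,1) *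
        (α (h,1) (1,y') * α (1,y) (h,y')) := by ac_rfl
    _ = α (1,y) (h,y') * α (h,1) (1,y*y') * α (1,y) (1,y') * α (1,y') (h,1) *
        (α (1,y) (h,1) * α (h,y) (1,y')) := by rw [← B]
    _ = α (1,y) (h,1) * α (1,y') (h,1) * α (h,1) (1,y*y') *
        (α (1,y) (h,y') * α (h,y) (1,y') * α (1,y) (1,y')) := by ac_rfl

theorem recon (hα : IsCocycle α) (g₁ h₁ : G₁) (g₂ h₂ : G₂) :
    α (g₁,g₂) (h₁,h₂) * α (g₁,1) (1,g₂) * α (h₁,1) (1,h₂) * α (h₁,1) (1,g₂)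
    = α (g₁,1) (h₁,1) * α (1,g₂) (1,h₂) * α (1,g₂) (h₁,1) * α (g₁*h₁,1) (1,g₂*h₂) := by
  have E1 := hα (g₁,g₂) (h₁,1) (1,h₂)
  have E2 := hα (g₁,1) (1,g₂) (h₁,1)
  have E3 := hα (g₁,1) (h₁,1) (1,g₂)
  have E4 := hα (g₁*h₁,1) (1,g₂) (1,h₂)
  simp only [Prod.mk_mul_mk, one_mul, mul_one] at E1 E2 E3 E4
  -- E1 : α (g₁,g₂) (h₁,1) * α (g₁*h₁,g₂) (1,h₂) = α (h₁,1) (1,h₂) * α (g₁,g₂) (h₁,h₂)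
  -- E2 : α (g₁,1) (1,g₂) * α (g₁,g₂) (h₁,1) = α (1,g₂) (h₁,1) * α (g₁,1) (h₁,g₂)
  -- E3 : α (g₁,1) (h₁,1) * α (g₁*h₁,1) (1,g₂) = α (h₁,1) (1,g₂) * α (g₁,1) (h₁,g₂)
  -- E4 : α (g₁*h₁,1) (1,g₂) * α (g₁*h₁,g₂) (1,h₂) = α (1,g₂) (1,h₂) * α (g₁*h₁,1) (1,g₂*h₂)
  apply mul_right_cancel
    (b := α (g₁,g₂) (h₁,1) * α (g₁*h₁,g₂) (1,h₂) * α (g₁,1) (h₁,g₂) * α (g₁*h₁,1) (1,g₂))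
  calc α (g₁,g₂) (h₁,h₂) * α (g₁,1) (1,g₂) * α (h₁,1) (1,h₂) * α (h₁,1) (1,g₂) *
        (α (g₁,g₂) (h₁,1) * α (g₁*h₁,g₂) (1,h₂) * α (g₁,1) (h₁,g₂) * α (g₁*h₁,1) (1,g₂))
      = α (g₁,1) (1,g₂) * α (h₁,1) (1,g₂) * α (g₁,g₂) (h₁,1) * α (g₁,1) (h₁,g₂) *
          α (g₁*h₁,1) (1,g₂) * α (g₁*h₁,g₂) (1,h₂) *
        (α (h₁,1) (1,h₂) * α (g₁,g₂) (h₁,h₂)) := by ac_rfl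
    _ = α (g₁,1) (1,g₂) * α (h₁,1) (1,g₂) * α (g₁,g₂) (h₁,1) * α (g₁,1) (h₁,g₂) *
          α (g₁*h₁,1) (1,g₂) * α (g₁*h₁,g₂) (1,h₂) *
        (α (g₁,g₂) (h₁,1) * α (g₁*h₁,g₂) (1,h₂)) := by rw [← E1]
    _ = α (h₁,1) (1,g₂) * α (g₁,1) (h₁,g₂) * α (g₁*h₁,1) (1,g₂) * α (g₁*h₁,g₂) (1,h₂) *
          α (g₁,g₂) (h₁,1) * α (g₁*h₁,g₂) (1,h₂) *
        (α (g₁,1) (1,g₂) * α (g₁,g₂) (h₁,1)) := by ac_rfl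
    _ = α (h₁,1) (1,g₂) * α (g₁,1) (h₁,g₂) * α (g₁*h₁,1) (1,g₂) * α (g₁*h₁,g₂) (1,h₂) *
          α (g₁,g₂) (h₁,1) * α (g₁*h₁,g₂) (1,h₂) *
        (α (1,g₂) (h₁,1) * α (g₁,1) (h₁,g₂)) := by rw [E2]
    _ = α (g₁,1) (h₁,g₂) * α (g₁*h₁,1) (1,g₂) * α (g₁*h₁,g₂) (1,h₂) * α (g₁,g₂) (h₁,1) *
          α (g₁*h₁,g₂) (1,h₂) * α (1,g₂) (h₁,1) *
        (α (h₁,1) (1,g₂) * α (g₁,1) (h₁,g₂)) := by ac_rfl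
    _ = α (g₁,1) (h₁,g₂) * α (g₁*h₁,1) (1,g₂) * α (g₁*h₁,g₂) (1,h₂) * α (g₁,g₂) (h₁,1) *
          α (g₁*h₁,g₂) (1,h₂) * α (1,g₂) (h₁,1) *
        (α (g₁,1) (h₁,1) * α (g₁*h₁,1) (1,g₂)) := by rw [← E3]
    _ = α (g₁,1) (h₁,g₂) * α (g₁*h₁,g₂) (1,h₂) * α (g₁,g₂) (h₁,1) * α (1,g₂) (h₁,1) *
          α (g₁,1) (h₁,1) * α (g₁*h₁,1) (1,g₂) *
        (α (g₁*h₁,1) (1,g₂) * α (g₁*h₁,g₂) (1,h₂)) := by ac_rfl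
    _ = α (g₁,1) (h₁,g₂) * α (g₁*h₁,g₂) (1,h₂) * α (g₁,g₂) (h₁,1) * α (1,g₂) (h₁,1) *
          α (g₁,1) (h₁,1) * α (g₁*h₁,1) (1,g₂) *
        (α (1,g₂) (1,h₂) * α (g₁*h₁,1) (1,g₂*h₂)) := by rw [E4]
    _ = α (g₁,1) (h₁,1) * α (1,g₂) (1,h₂) * α (1,g₂) (h₁,1) * α (g₁*h₁,1) (1,g₂*h₂) *
        (α (g₁,g₂) (h₁,1) * α (g₁*h₁,g₂) (1,h₂) * α (g₁,1) (h₁,g₂) * α (g₁*h₁,1) (1,g₂)) := by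
          ac_rfl


theorem bta_mul_left (hα : IsCocycle α) (h h' : G₁) (y : G₂) :
    bta α (h * h') y = bta α h y * bta α h' y := by
  simp only [bta]
  rw [← mul_div_mul_comm, div_eq_div_iff_mul_eq_mul]
  have := bimult_left hα h h' y
  calc α (1, y) (h * h', 1) * (α (h, 1) (1, y) * α (h', 1) (1, y)) =
      α (1, y) (h, 1) * α (1, y) (h', 1) * α (h * h', 1) (1, y) := this
    _ = α (1, y) (h, 1) * α (1, y) (h', 1) * α (h * h', 1) (1, y) := rfl

theorem bta_mul_right (hα : IsCocycle α) (h : G₁) (y y' : G₂) :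
    bta α h (y * y') = bta α h y * bta α h y' := by
  simp only [bta]
  rw [← mul_div_mul_comm, div_eq_div_iff_mul_eq_mul]
  exact bimult_right hα h y y'

end ProdIds

section Pairing

variable {G₁ G₂ : Type*} [Group G₁] [Group G₂]

/-- The tensor product of the (additivized) abelianizations. -/
abbrev TPab (G₁ G₂ : Type*) [Group G₁] [Group G₂] :=
  TensorProduct ℤ (Additive (Abelianization G₁)) (Additive (Abelianization G₂))

variable {α : G₁ × G₂ → G₁ × G₂ → ℂˣ}

/-- The pairing `bta` packaged as a monoid hom in both variables. -/
def btaHom (hα : IsCocycle α) : G₁ →* (G₂ →* ℂˣ) where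
  toFun g :=
    { toFun := bta α g
      map_one' := bta_one_right hα g
      map_mul' := bta_mul_right hα g }
  map_one' := MonoidHom.ext fun y => bta_one_left hα y
  map_mul' g g' := MonoidHom.ext fun y => bta_mul_left hα g g' y

/-- The pairing descends to abelianizations. -/
def pairAb (hα : IsCocycle α) : Abelianization G₁ →* (Abelianization G₂ →* ℂˣ) :=
  Abelianization.lift
    { toFun := fun g => Abelianization.lift (btaHom hα g)
      map_one' := by
        apply Abelianization.hom_ext
        ext y
        simp [Abelianization.lift_apply_of]
      map_mul' := fun g g' => by
        apply Abelianization.hom_ext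
        ext y
        simp [Abelianization.lift_apply_of] }

theorem pairAb_of (hα : IsCocycle α) (g : G₁) (y : G₂) :
    pairAb hα (Abelianization.of g) (Abelianization.of y) = bta α g y := by
  simp [pairAb, Abelianization.lift_apply_of, btaHom]

/-- The pairing as an additive hom out of the tensor product. -/
noncomputable def tHom (hα : IsCocycle α) : TPab G₁ G₂ →+ Additive ℂˣ :=
  (TensorProduct.lift
    (AddMonoidHom.toIntLinearMap
      { toFun := fun a =>
          (MonoidHom.toAdditive (pairAb hα a.toMul)).toIntLinearMap
        map_zero' := by
          ext b
          simp
        map_add' := fun a a' => by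
          ext b
          simp [toMul_add] })).toAddMonoidHom

theorem tHom_eval (hα : IsCocycle α) (g : G₁) (y : G₂) :
    tHom hα (Additive.ofMul (Abelianization.of g) ⊗ₜ Additive.ofMul (Abelianization.of y))
      = Additive.ofMul (bta α g y) := by
  simp [tHom, pairAb_of hα g y]

theorem of_surj {G : Type*} [Group G] :
    Function.Surjective (Abelianization.of : G →* Abelianization G) :=
  fun x => QuotientGroup.mk_surjective x

/-- Extensionality for additive homs out of the tensor product. -/
theorem tHom_ext {f g : TPab G₁ G₂ →+ Additive ℂˣ}
    (H : ∀ (a : G₁) (b : G₂),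
      f (Additive.ofMul (Abelianization.of a) ⊗ₜ Additive.ofMul (Abelianization.of b))
        = g (Additive.ofMul (Abelianization.of a) ⊗ₜ Additive.ofMul (Abelianization.of b))) :
    f = g := by
  ext x
  induction x using TensorProduct.induction_on with
  | zero => simp
  | tmul a b =>
      obtain ⟨a', rfl⟩ := of_surj a.toMul
      obtain ⟨b', rfl⟩ := of_surj b.toMul
      exact congrArg (fun t => ((Additive.toMul t : ℂˣ) : ℂ)) (H a' b')
  | add x y hx hy => simp [hx, hy]

end Pairing

section Construction

variable {G₁ G₂ : Type*} [Group G₁] [Group G₂]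

/-- The pairing associated to an additive hom out of the tensor product. -/
noncomputable def btaOf (f : TPab G₁ G₂ →+ Additive ℂˣ) (g : G₁) (y : G₂) : ℂˣ :=
  Additive.toMul (f (Additive.ofMul (Abelianization.of g) ⊗ₜ Additive.ofMul (Abelianization.of y)))

theorem btaOf_mul_left (f : TPab G₁ G₂ →+ Additive ℂˣ) (g g' : G₁) (y : G₂) :
    btaOf f (g * g') y = btaOf f g y * btaOf f g' y := by
  simp only [btaOf, map_mul, ofMul_mul, TensorProduct.add_tmul, map_add, toMul_add]

theorem btaOf_mul_right (f : TPab G₁ G₂ →+ Additive ℂˣ) (g : G₁) (y y' : G₂) :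
    btaOf f g (y * y') = btaOf f g y * btaOf f g y' := by
  simp only [btaOf, map_mul, ofMul_mul, TensorProduct.tmul_add, map_add, toMul_add]

theorem btaOf_one_left (f : TPab G₁ G₂ →+ Additive ℂˣ) (y : G₂) :
    btaOf f 1 y = 1 := by
  simp only [btaOf, map_one, ofMul_one, TensorProduct.zero_tmul, map_zero, toMul_zero]

theorem btaOf_one_right (f : TPab G₁ G₂ →+ Additive ℂˣ) (g : G₁) :
    btaOf f g 1 = 1 := by
  simp only [btaOf, map_one, ofMul_one, TensorProduct.tmul_zero, map_zero, toMul_zero]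

theorem btaOf_add (f f' : TPab G₁ G₂ →+ Additive ℂˣ) (g : G₁) (y : G₂) :
    btaOf (f + f') g y = btaOf f g y * btaOf f' g y := by
  simp only [btaOf, AddMonoidHom.add_apply, toMul_add]

theorem btaOf_zero (g : G₁) (y : G₂) :
    btaOf (0 : TPab G₁ G₂ →+ Additive ℂˣ) g y = 1 := by
  simp [btaOf]

theorem btaOf_tHom {α : G₁ × G₂ → G₁ × G₂ → ℂˣ} (hα : IsCocycle α) (g : G₁) (y : G₂) :
    btaOf (tHom hα) g y = bta α g y := by
  simp [btaOf, tHom_eval hα g y]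

/-- Assemble a 2-cochain on `G₁ × G₂` from two cochains and a pairing. -/
def Cmk (α₁ : G₁ → G₁ → ℂˣ) (α₂ : G₂ → G₂ → ℂˣ) (β : G₁ → G₂ → ℂˣ) :
    G₁ × G₂ → G₁ × G₂ → ℂˣ := fun a b => α₁ a.1 b.1 * α₂ a.2 b.2 * β b.1 a.2

theorem Cmk_cocycle {α₁ : G₁ → G₁ → ℂˣ} {α₂ : G₂ → G₂ → ℂˣ} {β : G₁ → G₂ → ℂˣ}
    (hα₁ : IsCocycle α₁) (hα₂ : IsCocycle α₂)
    (hl : ∀ g g' y, β (g * g') y = β g y * β g' y)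
    (hr : ∀ g y y', β g (y * y') = β g y * β g y') :
    IsCocycle (Cmk α₁ α₂ β) := by
  rintro ⟨a₁, a₂⟩ ⟨b₁, b₂⟩ ⟨c₁, c₂⟩
  simp only [Cmk, Prod.mk_mul_mk]
  rw [hr c₁ a₂ b₂, hl b₁ c₁ a₂]
  calc α₁ a₁ b₁ * α₂ a₂ b₂ * β b₁ a₂ * (α₁ (a₁ * b₁) c₁ * α₂ (a₂ * b₂) c₂ * (β c₁ a₂ * β c₁ b₂))
      = (α₁ a₁ b₁ * α₁ (a₁ * b₁) c₁) * (α₂ a₂ b₂ * α₂ (a₂ * b₂) c₂) *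
        (β b₁ a₂ * β c₁ a₂ * β c₁ b₂) := by ac_rfl
    _ = (α₁ b₁ c₁ * α₁ a₁ (b₁ * c₁)) * (α₂ b₂ c₂ * α₂ a₂ (b₂ * c₂)) *
        (β b₁ a₂ * β c₁ a₂ * β c₁ b₂) := by rw [hα₁ a₁ b₁ c₁, hα₂ a₂ b₂ c₂]
    _ = α₁ b₁ c₁ * α₂ b₂ c₂ * β c₁ b₂ * (α₁ a₁ (b₁ * c₁) * α₂ a₂ (b₂ * c₂) * (β b₁ a₂ * β c₁ a₂)) := by
        ac_rfl

/-- The reconstruction identity: any cocycle equals the assembled cocycle of its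
restrictions and pairing, up to the explicit coboundary of `μ (g₁,g₂) = α (g₁,1) (1,g₂)`. -/
theorem Cmk_recon {α : G₁ × G₂ → G₁ × G₂ → ℂˣ} (hα : IsCocycle α) :
    Cmk (res1 α) (res2 α) (bta α) = α * B2hom _ (fun p => α (p.1, 1) (1, p.2)) := by
  funext a b
  obtain ⟨g₁, g₂⟩ := a
  obtain ⟨h₁, h₂⟩ := b
  have T := recon hα g₁ h₁ g₂ h₂
  simp only [Cmk, Pi.mul_apply, B2hom_apply, Prod.mk_mul_mk, res1, res2, bta]
  rw [mul_div_assoc', ← div_eq_mul_inv, mul_div_assoc', div_eq_div_iff_mul_eq_mul, ← T]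
  ac_rfl

end Construction

section Assembly

variable (G₁ G₂ : Type*) [Group G₁] [Group G₂]

/-- Target group abbreviation. -/
abbrev Tgt := Multiplicative ((TPab G₁ G₂) →+ Additive ℂˣ)

variable {G₁ G₂}

theorem bta_coboundary (μ : G₁ × G₂ → ℂˣ) (g : G₁) (y : G₂) :
    bta (B2hom _ μ) g y = 1 := by
  simp only [bta, B2hom_apply, Prod.mk_mul_mk, one_mul, mul_one]
  rw [mul_comm (μ (1, y)) (μ (g, 1)), div_self']

theorem res1_coboundary (μ : G₁ × G₂ → ℂˣ) :
    res1 (B2hom _ μ) = B2hom G₁ (fun g => μ (g, 1)) := by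
  funext g h
  simp only [res1, B2hom_apply, Prod.mk_mul_mk, mul_one]

theorem res2_coboundary (μ : G₁ × G₂ → ℂˣ) :
    res2 (B2hom _ μ) = B2hom G₂ (fun g => μ (1, g)) := by
  funext g h
  simp only [res2, B2hom_apply, Prod.mk_mul_mk, one_mul]

variable (G₁ G₂)

/-- The forward map at cocycle level, landing in the quotients directly. -/
noncomputable def PhiH0 : ↥(Z2 (G₁ × G₂)) →* (H2 G₁ × H2 G₂ × Tgt G₁ G₂) :=
  MonoidHom.mk'
    (fun (α : ↥(Z2 (G₁ × G₂))) =>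
      (QuotientGroup.mk' ((B2 G₁).comap (Z2 G₁).subtype) (⟨res1 α.1, IsCocycle.res1 α.2⟩ : ↥(Z2 G₁)),
       QuotientGroup.mk' ((B2 G₂).comap (Z2 G₂).subtype) (⟨res2 α.1, IsCocycle.res2 α.2⟩ : ↥(Z2 G₂)),
       Multiplicative.ofAdd (tHom α.2)))
    (by
      intro α α'
      refine Prod.ext ?_ (Prod.ext ?_ ?_)
      · show QuotientGroup.mk' _ _ = QuotientGroup.mk' _ _ * QuotientGroup.mk' _ _
        rw [← map_mul]
        congr 1
      · show QuotientGroup.mk' _ _ = QuotientGroup.mk' _ _ * QuotientGroup.mk' _ _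
        rw [← map_mul]
        congr 1
      · show Multiplicative.ofAdd _ = Multiplicative.ofAdd _ * Multiplicative.ofAdd _
        rw [← ofAdd_add]
        congr 1
        refine tHom_ext fun g y => ?_
        simp only [tHom_eval, AddMonoidHom.add_apply, Subgroup.coe_mul, bta_mul, ofMul_mul]
        exact congrArg₂ (· + ·) (tHom_eval α.2 g y).symm (tHom_eval α'.2 g y).symm)

/-- The forward map on cohomology. -/
noncomputable def PhiH : H2 (G₁ × G₂) →* (H2 G₁ × H2 G₂ × Tgt G₁ G₂) :=
  QuotientGroup.lift (M := H2 G₁ × H2 G₂ × Tgt G₁ G₂) _ (PhiH0 G₁ G₂) (by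
    rintro ⟨f, hf⟩ hmem
    obtain ⟨μ, hμ⟩ := hmem
    have hμ' : B2hom _ μ = f := hμ
    refine Prod.ext ?_ (Prod.ext ?_ ?_)
    · show QuotientGroup.mk' _ _ = 1
      rw [QuotientGroup.mk'_apply, QuotientGroup.eq_one_iff]
      show res1 f ∈ B2 G₁
      exact ⟨fun g => μ (g, 1), by rw [← hμ', res1_coboundary]⟩
    · show QuotientGroup.mk' _ _ = 1
      rw [QuotientGroup.mk'_apply, QuotientGroup.eq_one_iff]
      show res2 f ∈ B2 G₂
      exact ⟨fun g => μ (1, g), by rw [← hμ', res2_coboundary]⟩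
    · show Multiplicative.ofAdd _ = 1
      have : tHom hf = 0 := by
        refine tHom_ext fun g y => ?_
        rw [tHom_eval hf g y]
        subst hμ'
        simp [bta_coboundary]
      rw [this]
      rfl)

/-- The reverse map at cocycle level. -/
noncomputable def Psi0 : ↥(Z2 G₁) × ↥(Z2 G₂) × Tgt G₁ G₂ →* ↥(Z2 (G₁ × G₂)) :=
  MonoidHom.mk'
    (fun x => ⟨Cmk x.1.1 x.2.1.1 (btaOf x.2.2.toAdd),
      Cmk_cocycle x.1.2 x.2.1.2 (btaOf_mul_left _) (btaOf_mul_right _)⟩)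
    (by
      rintro ⟨a, b, z⟩ ⟨a', b', z'⟩
      refine Subtype.ext ?_
      funext u v
      show Cmk (a.1 * a'.1) (b.1 * b'.1) (btaOf (z * z').toAdd) u v = _
      simp only [Cmk, Pi.mul_apply]
      rw [show (z * z').toAdd = z.toAdd + z'.toAdd from rfl, btaOf_add]
      show _ = Cmk a.1 b.1 (btaOf z.toAdd) u v * Cmk a'.1 b'.1 (btaOf z'.toAdd) u v
      simp only [Cmk]
      ac_rfl)

end Assembly

section Final

variable (G₁ G₂ : Type*) [Group G₁] [Group G₂]

noncomputable def Psi1 : ↥(Z2 G₁) →* ↥(Z2 (G₁ × G₂)) :=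
  (Psi0 G₁ G₂).comp (MonoidHom.inl _ _)

noncomputable def Psi2 : ↥(Z2 G₂) →* ↥(Z2 (G₁ × G₂)) :=
  (Psi0 G₁ G₂).comp ((MonoidHom.inr _ _).comp (MonoidHom.inl _ _))

noncomputable def Psi3 : Tgt G₁ G₂ →* ↥(Z2 (G₁ × G₂)) :=
  (Psi0 G₁ G₂).comp ((MonoidHom.inr _ _).comp (MonoidHom.inr _ _))

theorem Psi1_val (a : ↥(Z2 G₁)) :
    (Psi1 G₁ G₂ a).1 = Cmk a.1 (1 : G₂ → G₂ → ℂˣ) (btaOf 0) := rfl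

theorem Psi2_val (b : ↥(Z2 G₂)) :
    (Psi2 G₁ G₂ b).1 = Cmk (1 : G₁ → G₁ → ℂˣ) b.1 (btaOf 0) := rfl

theorem Psi3_val (z : Tgt G₁ G₂) :
    (Psi3 G₁ G₂ z).1 = Cmk (1 : G₁ → G₁ → ℂˣ) (1 : G₂ → G₂ → ℂˣ) (btaOf z.toAdd) := rfl

noncomputable def Psi1H : H2 G₁ →* H2 (G₁ × G₂) :=
  QuotientGroup.lift _ ((QuotientGroup.mk' _).comp (Psi1 G₁ G₂)) (by
    rintro ⟨f, hf⟩ ⟨μ, hμ⟩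
    have hμ' : B2hom _ μ = f := hμ
    show QuotientGroup.mk' _ _ = 1
    rw [QuotientGroup.mk'_apply, QuotientGroup.eq_one_iff]
    show (Psi1 G₁ G₂ ⟨f, hf⟩).1 ∈ B2 (G₁ × G₂)
    rw [Psi1_val]
    refine ⟨fun p => μ p.1, ?_⟩
    funext u v
    subst hμ'
    simp only [Cmk, B2hom_apply, btaOf_zero, Pi.one_apply, mul_one, Prod.fst_mul])

noncomputable def Psi2H : H2 G₂ →* H2 (G₁ × G₂) :=
  QuotientGroup.lift _ ((QuotientGroup.mk' _).comp (Psi2 G₁ G₂)) (by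
    rintro ⟨f, hf⟩ ⟨μ, hμ⟩
    have hμ' : B2hom _ μ = f := hμ
    show QuotientGroup.mk' _ _ = 1
    rw [QuotientGroup.mk'_apply, QuotientGroup.eq_one_iff]
    show (Psi2 G₁ G₂ ⟨f, hf⟩).1 ∈ B2 (G₁ × G₂)
    rw [Psi2_val]
    refine ⟨fun p => μ p.2, ?_⟩
    funext u v
    subst hμ'
    simp only [Cmk, B2hom_apply, btaOf_zero, Pi.one_apply, mul_one, one_mul, Prod.snd_mul])

noncomputable def Psi3H : Tgt G₁ G₂ →* H2 (G₁ × G₂) :=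
  (QuotientGroup.mk' _).comp (Psi3 G₁ G₂)

noncomputable def PsiH : H2 G₁ × H2 G₂ × Tgt G₁ G₂ →* H2 (G₁ × G₂) :=
  MonoidHom.mk'
    (fun p => Psi1H G₁ G₂ p.1 * Psi2H G₁ G₂ p.2.1 * Psi3H G₁ G₂ p.2.2)
    (by
      rintro ⟨a, b, z⟩ ⟨a', b', z'⟩
      show Psi1H G₁ G₂ (a * a') * Psi2H G₁ G₂ (b * b') * Psi3H G₁ G₂ (z * z') = _
      rw [map_mul, map_mul, map_mul]
      dsimp only
      exact (congrArg (fun t => t * (Psi3H G₁ G₂ z * Psi3H G₁ G₂ z'))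
          (mul_mul_mul_comm _ _ _ _)).trans (mul_mul_mul_comm _ _ _ _))

theorem PsiH_mk (a : ↥(Z2 G₁)) (b : ↥(Z2 G₂)) (z : Tgt G₁ G₂) :
    PsiH G₁ G₂ (QuotientGroup.mk a, QuotientGroup.mk b, z)
      = QuotientGroup.mk (Psi1 G₁ G₂ a * Psi2 G₁ G₂ b * Psi3 G₁ G₂ z) := by
  show Psi1H G₁ G₂ (QuotientGroup.mk a) * Psi2H G₁ G₂ (QuotientGroup.mk b) * Psi3H G₁ G₂ z = _
  rw [Psi1H, Psi2H, QuotientGroup.lift_mk, QuotientGroup.lift_mk]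
  show QuotientGroup.mk ((Psi1 G₁ G₂) a) * QuotientGroup.mk ((Psi2 G₁ G₂) b) *
    QuotientGroup.mk ((Psi3 G₁ G₂) z) = _
  rw [← QuotientGroup.mk_mul, ← QuotientGroup.mk_mul]

end Final

section Comp

variable {G₁ G₂ : Type*} [Group G₁] [Group G₂]

theorem bta_Cmk1 {a : G₁ → G₁ → ℂˣ} (ha : IsCocycle a) (β : G₁ → G₂ → ℂˣ)
    (hβ : ∀ g y, β g y = 1) (g : G₁) (y : G₂) :
    bta (Cmk a (1 : G₂ → G₂ → ℂˣ) β) g y = 1 := by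
  simp only [bta, Cmk, Pi.one_apply, mul_one, hβ]
  rw [cocycle_one_right ha g, cocycle_one_left ha g, div_self']

theorem bta_Cmk2 {b : G₂ → G₂ → ℂˣ} (hb : IsCocycle b) (β : G₁ → G₂ → ℂˣ)
    (hβ : ∀ g y, β g y = 1) (g : G₁) (y : G₂) :
    bta (Cmk (1 : G₁ → G₁ → ℂˣ) b β) g y = 1 := by
  simp only [bta, Cmk, Pi.one_apply, one_mul, mul_one, hβ]
  rw [cocycle_one_right hb y, cocycle_one_left hb y, div_self']

theorem bta_Cmk3 (f : TPab G₁ G₂ →+ Additive ℂˣ) (g : G₁) (y : G₂) :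
    bta (Cmk (1 : G₁ → G₁ → ℂˣ) (1 : G₂ → G₂ → ℂˣ) (btaOf f)) g y = btaOf f g y := by
  simp only [bta, Cmk, Pi.one_apply, one_mul, btaOf_one_left, div_one]

variable (G₁ G₂)

theorem psiPhi : (PsiH G₁ G₂).comp (PhiH G₁ G₂) = MonoidHom.id _ := by
  refine MonoidHom.ext fun x => QuotientGroup.induction_on x fun α => ?_
  show PsiH G₁ G₂ (PhiH G₁ G₂ (QuotientGroup.mk α)) = QuotientGroup.mk α
  rw [PhiH, QuotientGroup.lift_mk]
  show PsiH G₁ G₂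
    (QuotientGroup.mk ⟨res1 α.1, IsCocycle.res1 α.2⟩,
     QuotientGroup.mk ⟨res2 α.1, IsCocycle.res2 α.2⟩,
     Multiplicative.ofAdd (tHom α.2)) = QuotientGroup.mk α
  rw [PsiH_mk]
  set E := Psi1 G₁ G₂ ⟨res1 α.1, IsCocycle.res1 α.2⟩ *
    Psi2 G₁ G₂ ⟨res2 α.1, IsCocycle.res2 α.2⟩ *
    Psi3 G₁ G₂ (Multiplicative.ofAdd (tHom α.2)) with hEdef
  have hE : E.1 = Cmk (res1 α.1) (res2 α.1) (bta α.1) := by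
    funext u v
    show (Psi1 G₁ G₂ _).1 u v * (Psi2 G₁ G₂ _).1 u v * (Psi3 G₁ G₂ _).1 u v = _
    rw [Psi1_val, Psi2_val, Psi3_val]
    simp only [Cmk, Pi.one_apply, one_mul, mul_one, btaOf_zero, toAdd_ofAdd,
      btaOf_tHom α.2]
  rw [Cmk_recon α.2] at hE
  rw [QuotientGroup.eq]
  show E⁻¹ * α ∈ (B2 (G₁ × G₂)).comap (Z2 (G₁ × G₂)).subtype
  show (Z2 (G₁ × G₂)).subtype (E⁻¹ * α) ∈ B2 (G₁ × G₂)
  have : (Z2 (G₁ × G₂)).subtype (E⁻¹ * α) = E.1⁻¹ * α.1 := rfl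
  rw [this, hE, mul_inv_rev, inv_mul_cancel_right]
  exact inv_mem ⟨_, rfl⟩

set_option maxHeartbeats 2000000 in
theorem phiPsi : (PhiH G₁ G₂).comp (PsiH G₁ G₂) = MonoidHom.id _ := by
  refine MonoidHom.ext fun p => ?_
  obtain ⟨x, y, z⟩ := p
  refine QuotientGroup.induction_on x fun a => ?_
  refine QuotientGroup.induction_on y fun b => ?_
  show PhiH G₁ G₂ (PsiH G₁ G₂ (QuotientGroup.mk a, QuotientGroup.mk b, z))
    = (QuotientGroup.mk a, QuotientGroup.mk b, z)
  rw [PsiH_mk, PhiH, QuotientGroup.lift_mk]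
  set E := Psi1 G₁ G₂ a * Psi2 G₁ G₂ b * Psi3 G₁ G₂ z with hEdef
  have hE1 : res1 E.1 = a.1 * (fun _ _ => b.1 1 1) := by
    funext g h
    show E.1 (g, 1) (h, 1) = _
    show (Psi1 G₁ G₂ a).1 (g, 1) (h, 1) * (Psi2 G₁ G₂ b).1 (g, 1) (h, 1) *
      (Psi3 G₁ G₂ z).1 (g, 1) (h, 1) = _
    rw [Psi1_val, Psi2_val, Psi3_val]
    simp only [Cmk, Pi.one_apply, one_mul, mul_one, btaOf_zero, btaOf_one_right, Pi.mul_apply]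
  have hE2 : res2 E.1 = (fun _ _ => a.1 1 1) * b.1 := by
    funext g h
    show E.1 (1, g) (1, h) = _
    show (Psi1 G₁ G₂ a).1 (1, g) (1, h) * (Psi2 G₁ G₂ b).1 (1, g) (1, h) *
      (Psi3 G₁ G₂ z).1 (1, g) (1, h) = _
    rw [Psi1_val, Psi2_val, Psi3_val]
    simp only [Cmk, Pi.one_apply, one_mul, mul_one, btaOf_zero, btaOf_one_left, Pi.mul_apply]
  refine Prod.ext ?_ (Prod.ext ?_ ?_)
  · show QuotientGroup.mk' _ ⟨res1 E.1, _⟩ = QuotientGroup.mk a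
    rw [QuotientGroup.mk'_apply, QuotientGroup.eq]
    show (Z2 G₁).subtype _ ∈ B2 G₁
    have : (Z2 G₁).subtype (⟨res1 E.1, IsCocycle.res1 E.2⟩⁻¹ * a) = (res1 E.1)⁻¹ * a.1 := rfl
    rw [this, hE1, mul_inv_rev, inv_mul_cancel_right]
    exact inv_mem (const_mem_B2 _)
  · show QuotientGroup.mk' _ ⟨res2 E.1, _⟩ = QuotientGroup.mk b
    rw [QuotientGroup.mk'_apply, QuotientGroup.eq]
    show (Z2 G₂).subtype _ ∈ B2 G₂
    have : (Z2 G₂).subtype (⟨res2 E.1, IsCocycle.res2 E.2⟩⁻¹ * b) = (res2 E.1)⁻¹ * b.1 := rfl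
    rw [this, hE2, mul_comm (fun _ _ => a.1 1 1 : G₂ → G₂ → ℂˣ) b.1, mul_inv_rev, inv_mul_cancel_right]
    exact inv_mem (const_mem_B2 _)
  · show Multiplicative.ofAdd (tHom E.2) = z
    conv_rhs => rw [← ofAdd_toAdd z]
    refine congrArg Multiplicative.ofAdd ?_
    refine tHom_ext fun g y => ?_
    rw [tHom_eval E.2 g y]
    have hbta : bta E.1 g y = btaOf z.toAdd g y := by
      have : E.1 = (Psi1 G₁ G₂ a).1 * (Psi2 G₁ G₂ b).1 * (Psi3 G₁ G₂ z).1 := rfl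
      rw [this, bta_mul, bta_mul, Psi1_val, Psi2_val, Psi3_val,
        bta_Cmk1 a.2 _ (fun _ _ => btaOf_zero _ _) g y,
        bta_Cmk2 b.2 _ (fun _ _ => btaOf_zero _ _) g y,
        bta_Cmk3 z.toAdd g y, one_mul, one_mul]
    rw [hbta]
    show Additive.ofMul (Additive.toMul _) = _
    rw [ofMul_toMul]

end Comp

theorem stmt_3 (G₁ G₂ : Type) [Group G₁] [Group G₂] [Fintype G₁] [Fintype G₂] :
    Nonempty (H2 (G₁ × G₂) ≃*
      (H2 G₁ × H2 G₂ ×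
        Multiplicative ((TensorProduct ℤ (Additive (Abelianization G₁))
          (Additive (Abelianization G₂))) →+ Additive ℂˣ))) :=
  ⟨MonoidHom.toMulEquiv (PhiH G₁ G₂) (PsiH G₁ G₂) (psiPhi G₁ G₂) (phiPsi G₁ G₂)⟩
end

section
/- Let G be a finite group, Z ≤ Z(G) ∩ G' a central subgroup contained in the derived subgroup, and α ∈ Z²(G, ℂˣ) a cocycle whose class lies in the image of the inflation map inf : H²(G/Z, ℂˣ) → H²(G, ℂˣ). Then ℂ^α G ≅ ∏_{[β] : inf([β]) = [α]} ℂ^β (G/Z) as ℂ-algebras, where the product ranges over the cohomology classes [β] ∈ H²(G/Z, ℂˣ) with inflation equal to [α]. -/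
/-- The inflation of a 2-cocycle of `G ⧸ N` to `G`. -/
def inflCocycle {G : Type} [Group G] (N : Subgroup G) [N.Normal]
    (β : (G ⧸ N) → (G ⧸ N) → ℂˣ) : G → G → ℂˣ :=
  fun x y => β (QuotientGroup.mk x) (QuotientGroup.mk y)

theorem inflCocycle_mem {G : Type} [Group G] (N : Subgroup G) [N.Normal]
    {β : (G ⧸ N) → (G ⧸ N) → ℂˣ} (hβ : β ∈ Z2 (G ⧸ N)) :
    inflCocycle N β ∈ Z2 G := by
  intro g h k
  simpa [inflCocycle] using hβ (QuotientGroup.mk g) (QuotientGroup.mk h) (QuotientGroup.mk k)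

/-- The inflation map `H²(G ⧸ N, ℂˣ) → H²(G, ℂˣ)` (computed via representatives). -/
noncomputable def inflMap {G : Type} [Group G] (N : Subgroup G) [N.Normal] : H2 (G ⧸ N) → H2 G :=
  fun c => QuotientGroup.mk
    ⟨inflCocycle N (Quotient.out c).1, inflCocycle_mem N (Quotient.out c).2⟩

open scoped Classical

-- Fourier lemmas for finite comm groups valued in ℂˣ
section Fourier
variable (K : Type*) [CommGroup K] [Finite K]

noncomputable instance : Fintype K := Fintype.ofFinite K

lemma char_finite : Finite (K →* ℂˣ) := by
  have : NeZero ((Monoid.exponent K : ℂ)) :=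
    ⟨Nat.cast_ne_zero.mpr (Monoid.exponent_ne_zero_of_finite)⟩
  obtain ⟨e⟩ := CommGroup.monoidHom_mulEquiv_of_hasEnoughRootsOfUnity K ℂ
  exact Finite.of_equiv K e.symm.toEquiv

lemma char_card : Nat.card (K →* ℂˣ) = Nat.card K := by
  have : NeZero ((Monoid.exponent K : ℂ)) :=
    ⟨Nat.cast_ne_zero.mpr (Monoid.exponent_ne_zero_of_finite)⟩
  obtain ⟨e⟩ := CommGroup.monoidHom_mulEquiv_of_hasEnoughRootsOfUnity K ℂ
  exact Nat.card_congr e.toEquiv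

lemma char_sep {u : K} (hu : u ≠ 1) : ∃ χ : K →* ℂˣ, χ u ≠ 1 := by
  have : NeZero ((Monoid.exponent K : ℂ)) :=
    ⟨Nat.cast_ne_zero.mpr (Monoid.exponent_ne_zero_of_finite)⟩
  exact CommGroup.exists_apply_ne_one_of_hasEnoughRootsOfUnity K ℂ hu
end Fourier

section Fourier
variable {K : Type*} [CommGroup K] [Finite K]

lemma sum_char (u : K) [Fintype (K →* ℂˣ)] :
    ∑ χ : K →* ℂˣ, ((χ u : ℂˣ) : ℂ) = if u = 1 then (Nat.card (K →* ℂˣ) : ℂ) else 0 := by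
  split_ifs with h
  · subst h; simp [Nat.card_eq_fintype_card]
  · obtain ⟨χ₀, hχ₀⟩ := char_sep K h
    have key : ((χ₀ u : ℂˣ) : ℂ) * ∑ χ : K →* ℂˣ, ((χ u : ℂˣ) : ℂ)
        = ∑ χ : K →* ℂˣ, ((χ u : ℂˣ) : ℂ) := by
      rw [Finset.mul_sum]
      exact Fintype.sum_bijective (fun χ => χ₀ * χ)
        (Group.mulLeft_bijective χ₀) _ _ (fun χ => by simp)
    have : (((χ₀ u : ℂˣ) : ℂ) - 1) * ∑ χ : K →* ℂˣ, ((χ u : ℂˣ) : ℂ) = 0 := by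
      rw [sub_mul, one_mul, key, sub_self]
    rcases mul_eq_zero.mp this with h' | h'
    · exact absurd (Units.ext (by push_cast [sub_eq_zero] at h' ⊢; simpa using h')) hχ₀
    · exact h'

lemma fourier_inv (w : K → ℂ) [Fintype K] [Fintype (K →* ℂˣ)]
    (hw : ∀ χ : K →* ℂˣ, ∑ z : K, w z * ((χ z : ℂˣ) : ℂ) = 0) : w = 0 := by
  funext v
  have h1 : ∑ χ : K →* ℂˣ, (((χ v : ℂˣ) : ℂ))⁻¹ * ∑ z : K, w z * ((χ z : ℂˣ) : ℂ) = 0 := by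
    simp [hw]
  have h2 : ∀ χ : K →* ℂˣ, (((χ v : ℂˣ) : ℂ))⁻¹ * ∑ z : K, w z * ((χ z : ℂˣ) : ℂ)
      = ∑ z : K, w z * ((χ (v⁻¹ * z) : ℂˣ) : ℂ) := by
    intro χ
    rw [Finset.mul_sum]
    refine Finset.sum_congr rfl fun z _ => ?_
    have : ((χ (v⁻¹ * z) : ℂˣ) : ℂ) = (((χ v : ℂˣ) : ℂ))⁻¹ * ((χ z : ℂˣ) : ℂ) := by
      rw [map_mul, map_inv]; push_cast; ring
    rw [this]; ring
  rw [Finset.sum_congr rfl (fun χ _ => h2 χ), Finset.sum_comm] at h1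
  have h3 : ∀ z : K, ∑ χ : K →* ℂˣ, w z * ((χ (v⁻¹ * z) : ℂˣ) : ℂ)
      = w z * (if v⁻¹ * z = 1 then (Nat.card (K →* ℂˣ) : ℂ) else 0) := by
    intro z; rw [← Finset.mul_sum, sum_char]
  rw [Finset.sum_congr rfl (fun z _ => h3 z)] at h1
  have h4 : ∀ z : K, (v⁻¹ * z = 1) ↔ (z = v) := by
    intro z; constructor
    · intro h; simpa [eq_comm] using inv_mul_eq_one.mp h
    · rintro rfl; simp
  simp only [h4] at h1
  have h5 := h1
  rw [Finset.sum_eq_single v (fun z _ hz => by simp [hz]) (by simp)] at h5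
  simp only [if_pos rfl] at h5
  have hcard : (Nat.card (K →* ℂˣ) : ℂ) ≠ 0 := by
    have := char_finite K
    simpa using Nat.card_ne_zero.mpr ⟨inferInstance, this⟩
  have := mul_eq_zero.mp h5
  simp only [Pi.zero_apply]
  tauto
section Transversal
variable {G : Type} [Group G] (Z : Subgroup G) [Z.Normal]

/-- A set-theoretic section of `G → G ⧸ Z` sending `1` to `1`. -/
noncomputable def sec : G ⧸ Z → G := Function.update Quotient.out 1 1

lemma sec_one : sec Z (1 : G ⧸ Z) = 1 := Function.update_self _ _ _

lemma sec_spec (q : G ⧸ Z) : (QuotientGroup.mk (sec Z q) : G ⧸ Z) = q := by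
  rcases eq_or_ne q 1 with rfl | h
  · rw [sec_one]; simp
  · rw [sec, Function.update_of_ne h]
    exact QuotientGroup.out_eq' q

/-- `τ g = (sec ḡ)⁻¹ g ∈ Z`. -/
noncomputable def tauZ (g : G) : Z :=
  ⟨(sec Z (QuotientGroup.mk g))⁻¹ * g, by
    rw [← QuotientGroup.eq_one_iff, QuotientGroup.mk_mul, QuotientGroup.mk_inv, sec_spec]
    simp⟩

lemma sec_mul_tau (g : G) : sec Z (QuotientGroup.mk g) * (tauZ Z g : G) = g := by
  simp [tauZ]

lemma tau_coe (z : Z) : tauZ Z (z : G) = z := by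
  ext
  have h1 : (QuotientGroup.mk (z : G) : G ⧸ Z) = 1 := (QuotientGroup.eq_one_iff _).mpr z.2
  simp [tauZ, h1, sec_one]

/-- The factor set `f q r = s q s r (s (q r))⁻¹ ∈ Z`. -/
noncomputable def fctZ (q r : G ⧸ Z) : Z :=
  ⟨sec Z q * sec Z r * (sec Z (q * r))⁻¹, by
    rw [← QuotientGroup.eq_one_iff]
    simp only [QuotientGroup.mk_mul, QuotientGroup.mk_inv, sec_spec]
    group⟩

lemma fct_spec (q r : G ⧸ Z) : (fctZ Z q r : G) * sec Z (q * r) = sec Z q * sec Z r := by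
  simp [fctZ]

variable (hc : Z ≤ Subgroup.center G)
include hc

omit [Z.Normal] in
lemma comm_of_mem {z : G} (hz : z ∈ Z) (g : G) : g * z = z * g :=
  (Subgroup.mem_center_iff.mp (hc hz)) g

lemma tau_mul (g h : G) :
    (tauZ Z (g * h) : G) =
      (fctZ Z (QuotientGroup.mk g) (QuotientGroup.mk h) : G) * tauZ Z g * tauZ Z h := by
  have e1 := sec_mul_tau Z g
  have e2 := sec_mul_tau Z h
  have e3 := sec_mul_tau Z (g * h)
  set q := (QuotientGroup.mk g : G ⧸ Z)
  set r := (QuotientGroup.mk h : G ⧸ Z)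
  have hqr : (QuotientGroup.mk (g * h) : G ⧸ Z) = q * r := by simp [q, r]
  rw [hqr] at e3
  have e4 := fct_spec Z q r
  -- g * h = sec (q*r) * f * τg * τh, and g * h = sec(q*r) * τ(gh)
  have key : sec Z (q * r) * ((fctZ Z q r : G) * tauZ Z g * tauZ Z h) = g * h := by
    have c1 := comm_of_mem Z hc (tauZ Z g).2 (sec Z r)
    have c2 := comm_of_mem Z hc (fctZ Z q r).2 (sec Z (q * r))
    calc sec Z (q * r) * ((fctZ Z q r : G) * (tauZ Z g : G) * (tauZ Z h : G))
        = (sec Z (q * r) * (fctZ Z q r : G)) * (tauZ Z g : G) * (tauZ Z h : G) := by group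
      _ = ((fctZ Z q r : G) * sec Z (q * r)) * (tauZ Z g : G) * (tauZ Z h : G) := by rw [c2]
      _ = (sec Z q * sec Z r) * (tauZ Z g : G) * (tauZ Z h : G) := by rw [e4]
      _ = sec Z q * (sec Z r * (tauZ Z g : G)) * (tauZ Z h : G) := by group
      _ = sec Z q * ((tauZ Z g : G) * sec Z r) * (tauZ Z h : G) := by rw [c1]
      _ = sec Z q * (tauZ Z g : G) * (sec Z r * (tauZ Z h : G)) := by group
      _ = g * h := by rw [e1, e2]
  have : sec Z (q * r) * (tauZ Z (g * h) : G) = sec Z (q * r) * ((fctZ Z q r : G) * tauZ Z g * tauZ Z h) := by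
    rw [key, e3]
  exact mul_left_cancel this

lemma fct_cocycle (q r t : G ⧸ Z) :
    fctZ Z q r * fctZ Z (q * r) t = fctZ Z r t * fctZ Z q (r * t) := by
  ext
  push_cast
  have lhs : (fctZ Z q r : G) * (fctZ Z (q * r) t : G)
      = sec Z q * sec Z r * sec Z t * (sec Z (q * r * t))⁻¹ := by
    simp only [fctZ]
    group
  have c1 := comm_of_mem Z hc (fctZ Z r t).2 (sec Z q)
  have rhs : (fctZ Z r t : G) * (fctZ Z q (r * t) : G)
      = sec Z q * sec Z r * sec Z t * (sec Z (q * (r * t)))⁻¹ := by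
    rw [show (fctZ Z r t : G) * (fctZ Z q (r * t) : G)
        = (fctZ Z q (r * t) : G) * (fctZ Z r t : G) from
      (comm_of_mem Z hc (fctZ Z r t).2 _).symm]
    simp only [fctZ]
    -- (sq * s(rt) * s(q(rt))⁻¹) * (sr * st * s(rt)⁻¹)
    calc sec Z q * sec Z (r * t) * (sec Z (q * (r * t)))⁻¹ * (sec Z r * sec Z t * (sec Z (r * t))⁻¹)
        = sec Z q * sec Z (r * t) * ((sec Z (q * (r * t)))⁻¹ * (sec Z r * sec Z t * (sec Z (r * t))⁻¹)) := by
          group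
      _ = sec Z q * sec Z (r * t) * ((sec Z r * sec Z t * (sec Z (r * t))⁻¹) * (sec Z (q * (r * t)))⁻¹) := by
          rw [show (sec Z (q * (r * t)))⁻¹ * (sec Z r * sec Z t * (sec Z (r * t))⁻¹)
              = (sec Z r * sec Z t * (sec Z (r * t))⁻¹) * (sec Z (q * (r * t)))⁻¹ from
            (comm_of_mem Z hc (fctZ Z r t).2 _)]
      _ = sec Z q * (sec Z (r * t) * (sec Z r * sec Z t * (sec Z (r * t))⁻¹)) * (sec Z (q * (r * t)))⁻¹ := by
          group
      _ = sec Z q * (sec Z r * sec Z t) * (sec Z (q * (r * t)))⁻¹ := by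
          rw [show sec Z (r * t) * (sec Z r * sec Z t * (sec Z (r * t))⁻¹)
              = (sec Z r * sec Z t * (sec Z (r * t))⁻¹) * sec Z (r * t) from
            (comm_of_mem Z hc (fctZ Z r t).2 _)]
          group
      _ = sec Z q * sec Z r * sec Z t * (sec Z (q * (r * t)))⁻¹ := by group
  rw [lhs, rhs, mul_assoc q r t]

end Transversal
section CocycleAux
variable {G : Type} [Group G]

lemma z2_one_right {δ : G → G → ℂˣ} (hδ : δ ∈ Z2 G) (g : G) : δ g 1 = δ 1 1 := by
  have := hδ g 1 1
  simp only [mul_one] at this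
  exact mul_right_cancel this

lemma z2_one_left {δ : G → G → ℂˣ} (hδ : δ ∈ Z2 G) (g : G) : δ 1 g = δ 1 1 := by
  have := hδ 1 1 g
  simp only [one_mul] at this
  exact (mul_right_cancel this).symm

open commutatorElement in
/-- An element of the kernel of the coboundary map is a homomorphism, hence trivial on
the commutator subgroup. -/
lemma ker_b2hom_comm {ν : G → ℂˣ} (hν : B2hom G ν = 1) {z : G} (hz : z ∈ commutator G) :
    ν z = 1 := by
  have hmul : ∀ g h : G, ν (g * h) = ν g * ν h := by
    intro g h
    have := congrFun (congrFun (congrArg (fun f => (f : G → G → ℂˣ)) hν) g) h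
    simp only [B2hom, MonoidHom.coe_mk, OneHom.coe_mk, Pi.one_apply] at this
    rw [mul_inv_eq_one] at this
    exact this.symm
  let N : G →* ℂˣ := MonoidHom.mk' ν hmul
  have hle : commutator G ≤ N.ker := by
    rw [commutator_def, Subgroup.commutator_le]
    intro g _ h _
    have : N ⁅g, h⁆ = 1 := by
      rw [commutatorElement_def, map_mul, map_mul, map_mul, map_inv, map_inv,
        mul_comm (N g) (N h)]
      group
    exact this
  exact hle hz

lemma coboundary_choice_eq {Z : Subgroup G} (hZ : Z ≤ commutator G) {μ μ' : G → ℂˣ}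
    (h : B2hom G μ = B2hom G μ') {z : G} (hz : z ∈ Z) : μ z = μ' z := by
  have h1 : B2hom G (μ * μ'⁻¹) = 1 := by
    rw [map_mul, map_inv, h, mul_inv_cancel]
  have := ker_b2hom_comm h1 (hZ hz)
  simp only [Pi.mul_apply, Pi.inv_apply] at this
  rwa [mul_inv_eq_one] at this

variable (Z : Subgroup G) [Z.Normal]

lemma infl_coboundary (ρ : (G ⧸ Z) → ℂˣ) :
    inflCocycle Z (B2hom (G ⧸ Z) ρ) = B2hom G (fun g => ρ (QuotientGroup.mk g)) := by
  funext g h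
  simp [inflCocycle, B2hom]

lemma infl_injective {β β' : (G ⧸ Z) → (G ⧸ Z) → ℂˣ}
    (h : inflCocycle Z β = inflCocycle Z β') : β = β' := by
  funext q r
  obtain ⟨g, rfl⟩ := QuotientGroup.mk_surjective q
  obtain ⟨h', rfl⟩ := QuotientGroup.mk_surjective r
  exact congrFun (congrFun h g) h'

lemma infl_mul (β β' : (G ⧸ Z) → (G ⧸ Z) → ℂˣ) :
    inflCocycle Z (β * β') = inflCocycle Z β * inflCocycle Z β' := rfl

/-- Membership characterization: two classes in `H2` are equal iff representatives differ
by a coboundary. -/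
lemma h2_mk_eq {β β' : ↥(Z2 G)} :
    (QuotientGroup.mk β : H2 G) = QuotientGroup.mk β' ↔ ∃ ρ : G → ℂˣ, β'.1 = β.1 * B2hom G ρ := by
  rw [QuotientGroup.eq]
  simp only [Subgroup.mem_comap, Subgroup.coe_subtype, B2, MonoidHom.mem_range]
  constructor
  · rintro ⟨ρ, hρ⟩
    refine ⟨ρ, ?_⟩
    have h0 : ((β⁻¹ * β' : ↥(Z2 G)) : G → G → ℂˣ) = (β : G → G → ℂˣ)⁻¹ * β' := rfl
    rw [h0] at hρ
    rw [hρ, ← mul_assoc, mul_inv_cancel, one_mul]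
  · rintro ⟨ρ, hρ⟩
    refine ⟨ρ, ?_⟩
    show B2hom G ρ = ((β⁻¹ * β' : ↥(Z2 G)) : G → G → ℂˣ)
    have h0 : ((β⁻¹ * β' : ↥(Z2 G)) : G → G → ℂˣ) = (β : G → G → ℂˣ)⁻¹ * β' := rfl
    rw [h0, hρ, ← mul_assoc, inv_mul_cancel, one_mul]
end CocycleAux
section TGAone
variable {G : Type} [Group G] {A : Type} [Ring A] [Algebra ℂ A]

lemma tga_one {δ : G → G → ℂˣ} (hδ : δ ∈ Z2 G) (b : Module.Basis G ℂ A)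
    (hb : ∀ g h : G, b g * b h = ((δ g h : ℂˣ) : ℂ) • b (g * h)) :
    (1 : A) = (((δ 1 1 : ℂˣ) : ℂ))⁻¹ • b 1 := by
  set u : A := (((δ 1 1 : ℂˣ) : ℂ))⁻¹ • b 1 with hu
  have hr : ∀ g : G, b g * u = b g := by
    intro g
    rw [hu, mul_smul_comm, hb, mul_one, smul_smul,
      show ((δ g 1 : ℂˣ) : ℂ) = ((δ 1 1 : ℂˣ) : ℂ) from congrArg Units.val (z2_one_right (δ := δ) hδ g),
      inv_mul_cancel₀ (Units.ne_zero _), one_smul]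
  have heq : (LinearMap.mulRight ℂ u) = (LinearMap.id : A →ₗ[ℂ] A) :=
    Module.Basis.ext b (fun g => by simpa using hr g)
  have := congrArg (fun f : A →ₗ[ℂ] A => f 1) heq
  simpa using this.symm
end TGAone
set_option maxHeartbeats 1000000 in
theorem stmt_9 (G : Type) [Group G] [Fintype G] (Z : Subgroup G) [Z.Normal]
    (hZ : Z ≤ Subgroup.center G ⊓ commutator G)
    (α : ↥(Z2 G)) (hα : (QuotientGroup.mk α : H2 G) ∈ Set.range (inflMap Z))
    (A : Type) [Ring A] [Algebra ℂ A] (hA : IsTwistedGroupAlgebra G α.1 A)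
    (B : ↥(Z2 (G ⧸ Z)) → Type) [∀ β, Ring (B β)] [∀ β, Algebra ℂ (B β)]
    (hB : ∀ β, IsTwistedGroupAlgebra (G ⧸ Z) β.1 (B β)) :
    Nonempty (A ≃ₐ[ℂ]
      ∀ c : {c : H2 (G ⧸ Z) // inflMap Z c = QuotientGroup.mk α},
        B (Quotient.out c.1)) := by
  classical
  have hZc : Z ≤ Subgroup.center G := hZ.trans inf_le_left
  have hZd : Z ≤ commutator G := hZ.trans inf_le_right
  haveI : IsMulCommutative Z :=
    ⟨⟨fun a b => Subtype.ext ((Subgroup.mem_center_iff.mp (hZc b.2)) ↑a)⟩⟩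
  letI : CommGroup ↥Z := { (inferInstance : Group ↥Z) with
    mul_comm := fun a b => Subtype.ext ((Subgroup.mem_center_iff.mp (hZc b.2)) ↑a) }
  obtain ⟨bA, hbA⟩ := hA
  choose bB hbB using hB
  -- the fiber of the inflation map over the class of α
  have hrel0 : ∀ c : {c : H2 (G ⧸ Z) // inflMap Z c = QuotientGroup.mk α},
      ∃ ρ : G → ℂˣ, α.1 = inflCocycle Z (Quotient.out c.1).1 * B2hom G ρ := by
    intro c
    have h : (QuotientGroup.mk (⟨inflCocycle Z (Quotient.out c.1).1,
        inflCocycle_mem Z (Quotient.out c.1).2⟩ : ↥(Z2 G)) : H2 G) = QuotientGroup.mk α := c.2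
    exact h2_mk_eq.mp h
  choose φ hφ using hrel0
  -- inverse-free pointwise relation
  have hrel : ∀ c (g h : G), α.1 g h * φ c (g * h) =
      (Quotient.out c.1).1 (QuotientGroup.mk g) (QuotientGroup.mk h) * (φ c g * φ c h) := by
    intro c g h
    have h1 := congrFun (congrFun (hφ c) g) h
    simp only [Pi.mul_apply, inflCocycle, B2hom, MonoidHom.coe_mk, OneHom.coe_mk] at h1
    rw [h1]
    group
  obtain ⟨c0', hc0'⟩ := hα
  set c₀ : {c : H2 (G ⧸ Z) // inflMap Z c = QuotientGroup.mk α} := ⟨c0', hc0'⟩ with hc₀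
  have hmk1 : ∀ z : ↥Z, (QuotientGroup.mk (z : G) : G ⧸ Z) = 1 :=
    fun z => (QuotientGroup.eq_one_iff _).mpr z.2
  have hrelZ : ∀ c (z w : ↥Z), α.1 ↑z ↑w * φ c (↑z * ↑w) =
      (Quotient.out c.1).1 1 1 * (φ c ↑z * φ c ↑w) := by
    intro c z w
    have := hrel c ↑z ↑w
    rwa [hmk1, hmk1] at this
  have hφZ : ∀ c (z w : ↥Z), φ c (↑z * ↑w) =
      (α.1 ↑z ↑w)⁻¹ * ((Quotient.out c.1).1 1 1 * (φ c ↑z * φ c ↑w)) := by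
    intro c z w
    rw [← hrelZ c z w]
    group
  set lam : {c : H2 (G ⧸ Z) // inflMap Z c = QuotientGroup.mk α} → ℂˣ :=
    fun c => (Quotient.out c.1).1 1 1 * (((Quotient.out c₀.1).1 1 1))⁻¹ with hlam
  have θmul : ∀ c (z w : ↥Z),
      lam c * φ c ↑(z * w) * (φ c₀ ↑(z * w))⁻¹ =
        (lam c * φ c ↑z * (φ c₀ ↑z)⁻¹) * (lam c * φ c ↑w * (φ c₀ ↑w)⁻¹) := by
    intro c z w
    rw [show ((z * w : ↥Z) : G) = (↑z * ↑w : G) from rfl, hφZ c z w, hφZ c₀ z w, hlam]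
    ext
    simp only [Units.val_mul, Units.val_inv_eq_inv_val]
    field_simp
  set Θ : {c : H2 (G ⧸ Z) // inflMap Z c = QuotientGroup.mk α} → (↥Z →* ℂˣ) :=
    fun c => MonoidHom.mk' (fun z => lam c * φ c ↑z * (φ c₀ ↑z)⁻¹) (θmul c) with hΘ
  have hΘapp : ∀ c (z : ↥Z), Θ c z = lam c * φ c ↑z * (φ c₀ ↑z)⁻¹ := fun c z => rfl
  have hE : ∀ c (g h : G), φ c (g * h) = (α.1 g h)⁻¹ *
      ((Quotient.out c.1).1 (QuotientGroup.mk g) (QuotientGroup.mk h) * (φ c g * φ c h)) := by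
    intro c g h
    rw [← hrel c g h]
    group
  -- Θ is injective
  have θinj : Function.Injective Θ := by
    intro c c' hcc
    have hkz : ∀ z : ↥Z, φ c ↑z =
        (((Quotient.out c.1).1 1 1))⁻¹ * (Quotient.out c'.1).1 1 1 * φ c' ↑z := by
      intro z
      have h1 : Θ c z = Θ c' z := by rw [hcc]
      rw [hΘapp, hΘapp, hlam] at h1
      ext
      have h1C := congrArg Units.val h1
      simp only [Units.val_mul, Units.val_inv_eq_inv_val] at h1C ⊢
      field_simp at h1C ⊢
      linear_combination h1C
    -- φc/φc' is constant on cosets of Z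
    set ρq : G ⧸ Z → ℂˣ := fun q => φ c (sec Z q) * (φ c' (sec Z q))⁻¹ with hρq
    have hcoset : ∀ (g : G) (z : ↥Z), φ c (g * ↑z) * (φ c' (g * ↑z))⁻¹ =
        φ c g * (φ c' g)⁻¹ := by
      intro g z
      have e1 := hE c g ↑z
      have e2 := hE c' g ↑z
      rw [hmk1] at e1 e2
      rw [z2_one_right (Quotient.out c.1).2] at e1
      rw [z2_one_right (Quotient.out c'.1).2] at e2
      rw [e1, e2, hkz z]
      ext
      simp only [Units.val_mul, Units.val_inv_eq_inv_val]
      field_simp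
    have ρspec : ∀ g : G, φ c g * (φ c' g)⁻¹ = ρq (QuotientGroup.mk g) := by
      intro g
      conv_lhs => rw [← sec_mul_tau Z g]
      rw [hcoset]
    -- conclude that the classes agree
    have hcb : (Quotient.out c'.1).1 = (Quotient.out c.1).1 * B2hom (G ⧸ Z) ρq := by
      funext q r
      have e1 := hE c (sec Z q) (sec Z r)
      have e2 := hE c' (sec Z q) (sec Z r)
      rw [sec_spec, sec_spec] at e1 e2
      have r1 := ρspec (sec Z q)
      have r2 := ρspec (sec Z r)
      have r3 := ρspec (sec Z q * sec Z r)
      rw [sec_spec] at r1 r2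
      rw [QuotientGroup.mk_mul, sec_spec, sec_spec] at r3
      show (Quotient.out c'.1).1 q r =
        (Quotient.out c.1).1 q r * (ρq q * ρq r * (ρq (q * r))⁻¹)
      rw [← r1, ← r2, ← r3, e1, e2]
      ext
      simp only [Units.val_mul, Units.val_inv_eq_inv_val]
      field_simp
    refine Subtype.ext ?_
    rw [← Quotient.out_eq c.1, ← Quotient.out_eq c'.1]
    exact (h2_mk_eq.mpr ⟨ρq, hcb⟩)
  -- Θ is surjective
  have θsurj : Function.Surjective Θ := by
    intro χ
    set γ : (G ⧸ Z) → (G ⧸ Z) → ℂˣ :=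
      fun q r => (Quotient.out c₀.1).1 q r * χ (fctZ Z q r) with hγdef
    have hγZ2 : γ ∈ Z2 (G ⧸ Z) := by
      intro q r t
      have hf : fctZ Z q r * fctZ Z (q * r) t = fctZ Z r t * fctZ Z q (r * t) :=
        fct_cocycle Z hZc q r t
      have hβ := (Quotient.out c₀.1).2 q r t
      show ((Quotient.out c₀.1).1 q r * χ (fctZ Z q r)) *
          ((Quotient.out c₀.1).1 (q * r) t * χ (fctZ Z (q * r) t)) = _
      rw [mul_mul_mul_comm, ← map_mul, hf, map_mul, hβ, mul_mul_mul_comm]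
    set γS : ↥(Z2 (G ⧸ Z)) := ⟨γ, hγZ2⟩ with hγS
    set γ' : ↥(Z2 (G ⧸ Z)) := Quotient.out (QuotientGroup.mk γS : H2 (G ⧸ Z)) with hγ'
    obtain ⟨ρ, hρ⟩ : ∃ ρ, γS.1 = γ'.1 * B2hom (G ⧸ Z) ρ := by
      refine h2_mk_eq.mp ?_
      exact (Quotient.out_eq (QuotientGroup.mk γS : H2 (G ⧸ Z))).symm ▸ rfl
    set ν : G → ℂˣ := fun g => χ (tauZ Z g) with hν
    have htau : ∀ g h : G, χ (fctZ Z (QuotientGroup.mk g) (QuotientGroup.mk h)) *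
        (ν g * ν h) = ν (g * h) := by
      intro g h
      have h0 : tauZ Z (g * h) =
          fctZ Z (QuotientGroup.mk g) (QuotientGroup.mk h) * tauZ Z g * tauZ Z h :=
        Subtype.ext (by push_cast; exact tau_mul Z hZc g h)
      rw [hν]
      simp only [h0, map_mul]
      group
    set σ : G → ℂˣ := (fun g => ρ (QuotientGroup.mk g)) * ν * φ c₀ with hσ
    have hαγ' : α.1 = inflCocycle Z γ'.1 * B2hom G σ := by
      funext g h
      have F1 := congrFun (congrFun (hφ c₀) g) h
      have F2 := congrFun (congrFun hρ (QuotientGroup.mk g)) (QuotientGroup.mk h)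
      have F4 := htau g h
      simp only [Pi.mul_apply, inflCocycle, B2hom, MonoidHom.coe_mk, OneHom.coe_mk] at F1 F2 ⊢
      -- F2 : γ ḡ h̄ = γ' ḡ h̄ * (ρ ḡ * ρ h̄ * (ρ (ḡ * h̄))⁻¹)
      have F2' : (Quotient.out c₀.1).1 (QuotientGroup.mk g) (QuotientGroup.mk h) *
          χ (fctZ Z (QuotientGroup.mk g) (QuotientGroup.mk h)) =
          γ'.1 (QuotientGroup.mk g) (QuotientGroup.mk h) *
          (ρ (QuotientGroup.mk g) * ρ (QuotientGroup.mk h) *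
            (ρ (QuotientGroup.mk (g * h)))⁻¹) := by
        rw [QuotientGroup.mk_mul]
        exact F2
      rw [F1, hσ]
      simp only [Pi.mul_apply]
      -- now a commutative-group identity using F2' and F4
      have F4' : χ (fctZ Z (QuotientGroup.mk g) (QuotientGroup.mk h)) =
          ν (g * h) * (ν g * ν h)⁻¹ := by rw [← F4]; group
      have F2'' : γ'.1 (QuotientGroup.mk g) (QuotientGroup.mk h) =
          (Quotient.out c₀.1).1 (QuotientGroup.mk g) (QuotientGroup.mk h) *
          (ν (g * h) * (ν g * ν h)⁻¹) *
          (ρ (QuotientGroup.mk g) * ρ (QuotientGroup.mk h) *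
            (ρ (QuotientGroup.mk (g * h)))⁻¹)⁻¹ := by
        rw [← F4', F2']
        group
      rw [F2'']
      ext
      simp only [Units.val_mul, Units.val_inv_eq_inv_val]
      field_simp
    have hmem : inflMap Z (QuotientGroup.mk γS) = QuotientGroup.mk α := by
      show (QuotientGroup.mk (⟨inflCocycle Z γ'.1, inflCocycle_mem Z γ'.2⟩ : ↥(Z2 G))
        : H2 G) = QuotientGroup.mk α
      exact h2_mk_eq.mpr ⟨σ, hαγ'⟩
    refine ⟨⟨QuotientGroup.mk γS, hmem⟩, ?_⟩
    set cc : {c : H2 (G ⧸ Z) // inflMap Z c = QuotientGroup.mk α} :=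
      ⟨QuotientGroup.mk γS, hmem⟩ with hcc
    have houtcc : Quotient.out cc.1 = γ' := rfl
    have hcob : B2hom G (φ cc) = B2hom G σ := by
      have h1 := hφ cc
      rw [houtcc] at h1
      rw [hαγ'] at h1
      exact (mul_left_cancel h1.symm)
    have hφσ : ∀ z : ↥Z, φ cc ↑z = σ ↑z := fun z =>
      coboundary_choice_eq hZd hcob z.2
    have hΘχ : ∀ z : ↥Z, Θ cc z = (lam cc * ρ 1) * χ z := by
      intro z
      rw [hΘapp, hφσ z, hσ]
      simp only [Pi.mul_apply]
      rw [hν]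
      simp only [hmk1 z, tau_coe]
      group
    have hk1 : lam cc * ρ 1 = 1 := by
      have := hΘχ 1
      simp only [map_one, mul_one] at this
      exact this.symm
    ext z
    rw [hΘχ z, hk1, one_mul]
  -- instances and cardinalities
  haveI : Finite (↥Z →* ℂˣ) := char_finite ↥Z
  haveI : Fintype (↥Z →* ℂˣ) := Fintype.ofFinite _
  set eFZ : {c : H2 (G ⧸ Z) // inflMap Z c = QuotientGroup.mk α} ≃ (↥Z →* ℂˣ) :=
    Equiv.ofBijective Θ ⟨θinj, θsurj⟩ with heFZ
  haveI : Fintype {c : H2 (G ⧸ Z) // inflMap Z c = QuotientGroup.mk α} :=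
    Fintype.ofEquiv _ eFZ.symm
  have hcard1 : Fintype.card {c : H2 (G ⧸ Z) // inflMap Z c = QuotientGroup.mk α}
      = Fintype.card ↥Z := by
    rw [Fintype.card_congr eFZ]
    have h := char_card ↥Z
    rwa [Nat.card_eq_fintype_card, Nat.card_eq_fintype_card] at h
  -- the linear map
  set Φ : A →ₗ[ℂ] (∀ c : {c : H2 (G ⧸ Z) // inflMap Z c = QuotientGroup.mk α},
      B (Quotient.out c.1)) :=
    bA.constr ℂ (fun g => fun c => ((φ c g : ℂˣ) : ℂ) •
      bB (Quotient.out c.1) (QuotientGroup.mk g)) with hΦdef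
  have hΦb : ∀ g : G, Φ (bA g) = fun c => ((φ c g : ℂˣ) : ℂ) •
      bB (Quotient.out c.1) (QuotientGroup.mk g) := fun g => bA.constr_basis ℂ _ g
  -- multiplicativity on basis vectors
  have key : ∀ g h : G, Φ (bA g * bA h) = Φ (bA g) * Φ (bA h) := by
    intro g h
    rw [hbA, map_smul, hΦb]
    funext c
    have hCrel := congrArg Units.val (hrel c g h)
    simp only [Units.val_mul] at hCrel
    simp only [Pi.smul_apply, Pi.mul_apply, hΦb g, hΦb h]
    rw [smul_mul_smul_comm, hbB (Quotient.out c.1) (QuotientGroup.mk g) (QuotientGroup.mk h),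
      smul_smul, smul_smul, ← QuotientGroup.mk_mul]
    congr 1
    rw [hCrel]
    ring
  have hmul : ∀ x y : A, Φ (x * y) = Φ x * Φ y := by
    have step1 : ∀ (g : G) (y : A), Φ (bA g * y) = Φ (bA g) * Φ y := by
      intro g y
      have hLM : (Φ ∘ₗ LinearMap.mulLeft ℂ (bA g))
          = (LinearMap.mulLeft ℂ (Φ (bA g))) ∘ₗ Φ :=
        Module.Basis.ext bA (fun h => by exact key g h)
      exact LinearMap.congr_fun hLM y
    intro x y
    have hLM2 : (Φ ∘ₗ LinearMap.mulRight ℂ y) = (LinearMap.mulRight ℂ (Φ y)) ∘ₗ Φ :=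
      Module.Basis.ext bA (fun g => by exact step1 g y)
    exact LinearMap.congr_fun hLM2 x
  have hone : Φ 1 = 1 := by
    rw [tga_one α.2 bA hbA, map_smul, hΦb 1]
    funext c
    have hC := hrel c 1 1
    rw [QuotientGroup.mk_one] at hC
    have hCv := congrArg Units.val hC
    simp only [Units.val_mul, mul_one] at hCv
    show ((α.1 1 1 : ℂˣ) : ℂ)⁻¹ • (((φ c 1 : ℂˣ) : ℂ) •
      bB (Quotient.out c.1) (QuotientGroup.mk 1)) = 1
    rw [QuotientGroup.mk_one, tga_one (Quotient.out c.1).2 (bB _) (hbB _), smul_smul]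
    congr 1
    have hne1 : ((φ c 1 : ℂˣ) : ℂ) ≠ 0 := Units.ne_zero _
    have hne2 : ((α.1 1 1 : ℂˣ) : ℂ) ≠ 0 := Units.ne_zero _
    have hgoal : ((φ c 1 : ℂˣ) : ℂ) * (((Quotient.out c.1).1 1 1 : ℂˣ) : ℂ)
        = ((α.1 1 1 : ℂˣ) : ℂ) :=
      mul_left_cancel₀ hne1 (by linear_combination (-1 : ℂ) * hCv)
    field_simp
    linear_combination hgoal
  -- the product decomposition of G
  have hmkprod : ∀ (q : G ⧸ Z) (z : ↥Z),
      (QuotientGroup.mk (sec Z q * ↑z) : G ⧸ Z) = q := by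
    intro q z
    rw [QuotientGroup.mk_mul, sec_spec, hmk1, mul_one]
  have htauprod : ∀ (q : G ⧸ Z) (z : ↥Z), tauZ Z (sec Z q * ↑z) = z := by
    intro q z
    apply Subtype.ext
    show (sec Z (QuotientGroup.mk (sec Z q * ↑z)))⁻¹ * (sec Z q * ↑z) = ↑z
    rw [hmkprod]
    group
  set e : (G ⧸ Z) × ↥Z ≃ G :=
    { toFun := fun p => sec Z p.1 * ↑p.2
      invFun := fun g => (QuotientGroup.mk g, tauZ Z g)
      left_inv := fun p => Prod.ext (hmkprod p.1 p.2) (htauprod p.1 p.2)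
      right_inv := fun g => sec_mul_tau Z g } with he
  -- injectivity of Φ
  have hinj : Function.Injective Φ := by
    rw [← LinearMap.ker_eq_bot]
    rw [Submodule.eq_bot_iff]
    intro x hx
    replace hx : Φ x = 0 := hx
    set a : G → ℂ := bA.equivFun x with ha
    have hxa : x = ∑ g : G, a g • bA g := by rw [ha]; exact (bA.sum_equivFun x).symm
    have hcomp : ∀ c q, ∑ z : ↥Z,
        a (sec Z q * ↑z) * ((φ c (sec Z q * ↑z) : ℂˣ) : ℂ) = 0 := by
      intro c q
      have h2 := congrFun hx c
      rw [hxa] at h2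
      simp only [map_sum, map_smul, Pi.zero_apply] at h2
      rw [Finset.sum_apply] at h2
      simp only [Pi.smul_apply, hΦb] at h2
      -- apply the coordinate functional at q
      set L : B (Quotient.out c.1) →ₗ[ℂ] ℂ :=
        (Finsupp.lapply q) ∘ₗ ((bB (Quotient.out c.1)).repr : B (Quotient.out c.1) →ₗ[ℂ] ((G ⧸ Z) →₀ ℂ)) with hL
      have h3 := congrArg L h2
      rw [map_sum, map_zero] at h3
      have h4 : ∀ g : G, L (a g • ((φ c g : ℂˣ) : ℂ) • bB (Quotient.out c.1) (QuotientGroup.mk g))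
          = a g * ((φ c g : ℂˣ) : ℂ) * (if QuotientGroup.mk g = q then (1:ℂ) else 0) := by
        intro g
        rw [map_smul, map_smul]
        have : L (bB (Quotient.out c.1) (QuotientGroup.mk g))
            = ((bB (Quotient.out c.1)).repr (bB (Quotient.out c.1) (QuotientGroup.mk g))) q := rfl
        rw [smul_eq_mul, smul_eq_mul, this, Module.Basis.repr_self, Finsupp.single_apply, mul_assoc]
      rw [Finset.sum_congr rfl (fun g _ => h4 g)] at h3
      -- reindex the sum over (G ⧸ Z) × ↥Z
      rw [← Equiv.sum_comp e (fun g => a g * ((φ c g : ℂˣ) : ℂ) *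
        (if QuotientGroup.mk g = q then (1:ℂ) else 0))] at h3
      rw [Fintype.sum_prod_type] at h3
      have h5 : ∀ q' : G ⧸ Z, ∀ z : ↥Z,
          a (e (q', z)) * ((φ c (e (q', z)) : ℂˣ) : ℂ) *
            (if QuotientGroup.mk (e (q', z)) = q then (1:ℂ) else 0)
          = if q' = q then a (sec Z q' * ↑z) * ((φ c (sec Z q' * ↑z) : ℂˣ) : ℂ) else 0 := by
        intro q' z
        have : e (q', z) = sec Z q' * ↑z := rfl
        rw [this, hmkprod]
        split_ifs <;> simp
      rw [Finset.sum_congr rfl (fun q' _ => Finset.sum_congr rfl (fun z _ => h5 q' z))] at h3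
      rw [Finset.sum_comm] at h3
      have h6 : ∀ z : ↥Z, ∑ q' : G ⧸ Z,
          (if q' = q then a (sec Z q' * ↑z) * ((φ c (sec Z q' * ↑z) : ℂˣ) : ℂ) else 0)
          = a (sec Z q * ↑z) * ((φ c (sec Z q * ↑z) : ℂˣ) : ℂ) := by
        intro z
        rw [Finset.sum_ite_eq' Finset.univ q
          (fun q' => a (sec Z q' * ↑z) * ((φ c (sec Z q' * ↑z) : ℂˣ) : ℂ))]
        simp
      rw [Finset.sum_congr rfl (fun z _ => h6 z)] at h3
      exact h3
    -- all coefficients vanish, via Fourier inversion on Z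
    have hzero : ∀ g : G, a g = 0 := by
      intro g
      set q : G ⧸ Z := QuotientGroup.mk g with hq
      set w : ↥Z → ℂ := fun z => a (sec Z q * ↑z) *
        (((α.1 (sec Z q) ↑z : ℂˣ) : ℂ))⁻¹ * ((φ c₀ ↑z : ℂˣ) : ℂ) with hw
      have hwchar : ∀ χ : ↥Z →* ℂˣ, ∑ z : ↥Z, w z * ((χ z : ℂˣ) : ℂ) = 0 := by
        intro χ
        obtain ⟨c, hc⟩ := θsurj χ
        have hpt : ∀ z : ↥Z, a (sec Z q * ↑z) * ((φ c (sec Z q * ↑z) : ℂˣ) : ℂ)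
            = (((lam c)⁻¹ * (Quotient.out c.1).1 1 1 * φ c (sec Z q) : ℂˣ) : ℂ) *
              (w z * ((χ z : ℂˣ) : ℂ)) := by
          intro z
          have e1 := hE c (sec Z q) ↑z
          rw [sec_spec, hmk1] at e1
          rw [z2_one_right (Quotient.out c.1).2] at e1
          have e2 : χ z = lam c * φ c ↑z * (φ c₀ ↑z)⁻¹ := by rw [← hc]; exact hΘapp c z
          have e3 : φ c ↑z = (lam c)⁻¹ * (χ z * φ c₀ ↑z) := by rw [e2]; group
          rw [hw, e1, e3]
          simp only [Units.val_mul, Units.val_inv_eq_inv_val]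
          field_simp
        have hsum := hcomp c q
        rw [Finset.sum_congr rfl (fun z _ => hpt z), ← Finset.mul_sum] at hsum
        rcases mul_eq_zero.mp hsum with h | h
        · exact absurd h (Units.ne_zero _)
        · exact h
      have hw0 := fourier_inv w hwchar
      have hwg : w (tauZ Z g) = 0 := by rw [hw0]; rfl
      simp only [hw] at hwg
      rw [mul_assoc] at hwg
      rcases mul_eq_zero.mp hwg with h | h
      · rwa [sec_mul_tau Z g] at h
      · exact absurd h (mul_ne_zero (inv_ne_zero (Units.ne_zero _)) (Units.ne_zero _))
    rw [hxa]
    rw [Finset.sum_congr rfl (fun g _ => by rw [hzero g, zero_smul])]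
    exact Finset.sum_const_zero
  -- dimension count
  haveI : FiniteDimensional ℂ A := Module.Finite.of_basis bA
  haveI : ∀ β : ↥(Z2 (G ⧸ Z)), FiniteDimensional ℂ (B β) :=
    fun β => Module.Finite.of_basis (bB β)
  have hfr : Module.finrank ℂ A = Module.finrank ℂ
      (∀ c : {c : H2 (G ⧸ Z) // inflMap Z c = QuotientGroup.mk α}, B (Quotient.out c.1)) := by
    rw [Module.finrank_eq_card_basis bA, Module.finrank_pi_fintype]
    have hB : ∀ c : {c : H2 (G ⧸ Z) // inflMap Z c = QuotientGroup.mk α},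
        Module.finrank ℂ (B (Quotient.out c.1)) = Fintype.card (G ⧸ Z) :=
      fun c => Module.finrank_eq_card_basis (bB (Quotient.out c.1))
    rw [Finset.sum_congr rfl (fun c _ => hB c), Finset.sum_const, Finset.card_univ, hcard1,
      smul_eq_mul]
    have := Subgroup.card_eq_card_quotient_mul_card_subgroup Z
    rw [Nat.card_eq_fintype_card, Nat.card_eq_fintype_card, Nat.card_eq_fintype_card] at this
    rw [this]
    ring
  have hsurj : Function.Surjective Φ :=
    (LinearMap.injective_iff_surjective_of_finrank_eq_finrank hfr).mp hinj
  exact ⟨AlgEquiv.ofLinearEquiv (LinearEquiv.ofBijective Φ ⟨hinj, hsurj⟩) hone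
    (fun x y => hmul x y)⟩
end Fourier
end

section
/- Let G be a finite group and let 1 → Z → G̃ → G → 1 be a central extension with Z ⊆ Z(G̃) ∩ G̃' and Z ≅ H²(G, ℂˣ) such that the transgression tra : Hom(Z, ℂˣ) → H²(G, ℂˣ) is an isomorphism (i.e. G̃ is a representation group of G). For χ ∈ Hom(Z, ℂˣ) with tra(χ) = [α], there is a bijection between the set Irr^α(G) of inequivalent irreducible α-representations of G and the set Irr(G̃ | χ) of irreducible complex representations of G̃ whose restriction to Z contains χ. -/
/-- For a central extension `f : Gs → G` with section `μ`, the element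
`μ x * μ y * (μ (x y))⁻¹` of `ker f`. -/
def secElem {Gs G : Type} [Group Gs] [Group G] (f : Gs →* G) (μ : G → Gs)
    (hμ : ∀ x, f (μ x) = x) (x y : G) : ↥f.ker :=
  ⟨μ x * μ y * (μ (x * y))⁻¹, by simp [MonoidHom.mem_ker, hμ, mul_assoc]⟩

/-- Isomorphism classes of `R`-modules satisfying a predicate `P`. -/
def modClasses (R : Type) [Ring R] (P : ModuleCat.{0} R → Prop) : Type 1 :=
  Quotient (⟨fun (M N : {M : ModuleCat.{0} R // P M}) => Nonempty (M.1 ≃ₗ[R] N.1),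
    ⟨fun M => ⟨LinearEquiv.refl R M.1⟩,
     fun h => h.elim fun e => ⟨e.symm⟩,
     fun h h' => h.elim fun e => h'.elim fun f => ⟨e.trans f⟩⟩⟩ : Setoid _)

/-- A module over the group algebra `ℂ[Gs]` lies over the character `χ` of a
central subgroup `Z` if it has a nonzero vector on which `Z` acts through `χ`. -/
def liesOver {Gs : Type} [Group Gs] (Z : Subgroup Gs) (χ : ↥Z →* ℂˣ)
    (M : ModuleCat.{0} (MonoidAlgebra ℂ Gs)) : Prop :=
  ∃ v : M, v ≠ 0 ∧ ∀ z : ↥Z,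
    (MonoidAlgebra.of ℂ Gs (z : Gs)) • v
      = (algebraMap ℂ (MonoidAlgebra ℂ Gs) ((χ z : ℂˣ) : ℂ)) • v


lemma simple_transfer {R S M : Type*} [Ring R] [Ring S] [AddCommGroup M]
    (π : R →+* S) (hπ : Function.Surjective π)
    (mS : Module S M) (mR : Module R M)
    (hsmul : ∀ (r : R) (v : M), r • v = π r • v) :
    IsSimpleModule R M ↔ IsSimpleModule S M := by
  rw [isSimpleModule_iff, isSimpleModule_iff]
  refine OrderIso.isSimpleOrder_iff ?_
  exact
    { toFun := fun p =>
        { carrier := p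
          add_mem' := fun h h' => p.add_mem h h'
          zero_mem' := p.zero_mem
          smul_mem' := fun s v hv => by
            obtain ⟨r, rfl⟩ := hπ s
            have := p.smul_mem r hv
            rw [hsmul] at this
            exact this }
      invFun := fun q =>
        { carrier := q
          add_mem' := fun h h' => q.add_mem h h'
          zero_mem' := q.zero_mem
          smul_mem' := fun r v hv => by
            have := q.smul_mem (π r) hv
            rw [← hsmul] at this
            exact this }
      left_inv := fun p => by ext x; rfl
      right_inv := fun q => by ext x; rfl
      map_rel_iff' := Iff.rfl }

section Ext
variable {R S : Type} [Ring R] [Ring S] (π : R →+* S) (hπ : Function.Surjective π)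
variable {N : Type} [AddCommGroup N] [Module R N]

lemma choose_smul (h0 : ∀ r : R, π r = 0 → ∀ v : N, r • v = 0) (r : R) (v : N) :
    (hπ (π r)).choose • v = r • v := by
  have h1 : π ((hπ (π r)).choose - r) = 0 := by
    rw [map_sub, (hπ (π r)).choose_spec, sub_self]
  have h2 := h0 _ h1 v
  rwa [sub_smul, sub_eq_zero] at h2

noncomputable def extModule (h0 : ∀ r : R, π r = 0 → ∀ v : N, r • v = 0) : Module S N where
  smul s v := (hπ s).choose • v
  one_smul v := by
    show (hπ 1).choose • v = v
    rw [show (1 : S) = π 1 by rw [map_one], choose_smul π hπ h0, one_smul]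
  mul_smul s t v := by
    obtain ⟨r, rfl⟩ := hπ s
    obtain ⟨r', rfl⟩ := hπ t
    show (hπ _).choose • v = (hπ _).choose • ((hπ _).choose • v)
    rw [← map_mul, choose_smul π hπ h0, choose_smul π hπ h0, choose_smul π hπ h0, mul_smul]
  smul_zero s := smul_zero _
  smul_add s v w := smul_add _ _ _
  add_smul s t v := by
    obtain ⟨r, rfl⟩ := hπ s
    obtain ⟨r', rfl⟩ := hπ t
    show (hπ _).choose • v = (hπ _).choose • v + (hπ _).choose • v
    rw [← map_add, choose_smul π hπ h0, choose_smul π hπ h0, choose_smul π hπ h0, add_smul]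
  zero_smul v := by
    show (hπ 0).choose • v = 0
    rw [show (0 : S) = π 0 by rw [map_zero], choose_smul π hπ h0, zero_smul]
end Ext


section Main
variable {Gs G : Type} [Group Gs] [Group G]
variable (f : Gs →* G) (hcent : f.ker ≤ Subgroup.center Gs)
  (μ : G → Gs) (hμ : ∀ x, f (μ x) = x) (χ : ↥f.ker →* ℂˣ)
variable {A : Type} [Ring A] [Algebra ℂ A] (b : Module.Basis G ℂ A)

def kk (s : Gs) : ↥f.ker := ⟨s * (μ (f s))⁻¹, by simp [MonoidHom.mem_ker, hμ]⟩

lemma bone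
    (hb : ∀ g h : G, b g * b h = ((χ (secElem f μ hμ g h) : ℂˣ) : ℂ) • b (g * h)) :
    (((χ ⟨μ 1, MonoidHom.mem_ker.mpr (hμ 1)⟩ : ℂˣ) : ℂ))⁻¹ • b 1 = 1 := by
  have hsec : ∀ g : G, secElem f μ hμ 1 g = ⟨μ 1, MonoidHom.mem_ker.mpr (hμ 1)⟩ := by
    intro g
    apply Subtype.ext
    show μ 1 * μ g * (μ (1 * g))⁻¹ = μ 1
    rw [one_mul, mul_inv_cancel_right]
  have hgen : ∀ g : G, ((((χ ⟨μ 1, MonoidHom.mem_ker.mpr (hμ 1)⟩ : ℂˣ) : ℂ))⁻¹ • b 1) * b g = b g := by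
    intro g
    rw [smul_mul_assoc, hb 1 g, hsec g, one_mul, smul_smul,
      inv_mul_cancel₀ (Units.ne_zero _), one_smul]
  have hall : ∀ a : A, ((((χ ⟨μ 1, MonoidHom.mem_ker.mpr (hμ 1)⟩ : ℂˣ) : ℂ))⁻¹ • b 1) * a = a := by
    intro a
    have h2 : LinearMap.mulLeft ℂ ((((χ ⟨μ 1, MonoidHom.mem_ker.mpr (hμ 1)⟩ : ℂˣ) : ℂ))⁻¹ • b 1)
        = LinearMap.id := b.ext fun g => by simpa using hgen g
    have := DFunLike.congr_fun h2 a
    simpa using this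
  have := hall 1
  rwa [mul_one] at this

include hcent in
lemma kk_mul (s t : Gs) :
    kk f μ hμ (s * t) = kk f μ hμ s * kk f μ hμ t * secElem f μ hμ (f s) (f t) := by
  have hu : ∀ a : Gs, a * (t * (μ (f t))⁻¹) = (t * (μ (f t))⁻¹) * a :=
    fun a => Subgroup.mem_center_iff.mp (hcent (kk f μ hμ t).2) a
  apply Subtype.ext
  show s * t * (μ (f (s * t)))⁻¹
      = s * (μ (f s))⁻¹ * (t * (μ (f t))⁻¹) * (μ (f s) * μ (f t) * (μ (f s * f t))⁻¹)
  rw [map_mul]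
  calc s * t * (μ (f s * f t))⁻¹
      = s * (μ (f s))⁻¹ * ((t * (μ (f t))⁻¹) * μ (f s)) * (μ (f t) * (μ (f s * f t))⁻¹) := by
        rw [← hu (μ (f s))]; group
    _ = s * (μ (f s))⁻¹ * (t * (μ (f t))⁻¹) * (μ (f s) * μ (f t) * (μ (f s * f t))⁻¹) := by
        group

noncomputable def phi
    (hb : ∀ g h : G, b g * b h = ((χ (secElem f μ hμ g h) : ℂˣ) : ℂ) • b (g * h)) :
    Gs →* A where
  toFun s := ((χ (kk f μ hμ s) : ℂˣ) : ℂ) • b (f s)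
  map_one' := by
    show ((χ (kk f μ hμ 1) : ℂˣ) : ℂ) • b (f 1) = 1
    have h1 : kk f μ hμ 1 = (⟨μ 1, MonoidHom.mem_ker.mpr (hμ 1)⟩ : ↥f.ker)⁻¹ := by
      apply Subtype.ext
      show 1 * (μ (f 1))⁻¹ = (μ 1)⁻¹
      rw [one_mul, map_one]
    rw [h1, map_inv, map_one f, Units.val_inv_eq_inv_val]
    exact bone f μ hμ χ b hb
  map_mul' s t := by
    show ((χ (kk f μ hμ (s * t)) : ℂˣ) : ℂ) • b (f (s * t))
        = (((χ (kk f μ hμ s) : ℂˣ) : ℂ) • b (f s)) * (((χ (kk f μ hμ t) : ℂˣ) : ℂ) • b (f t))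
    rw [smul_mul_smul_comm, hb (f s) (f t), smul_smul,
      kk_mul f hcent μ hμ s t, map_mul, map_mul, Units.val_mul, Units.val_mul, map_mul f]
end Main
section Main2
variable {Gs G : Type} [Group Gs] [Group G]
variable (f : Gs →* G) (hcent : f.ker ≤ Subgroup.center Gs)
  (μ : G → Gs) (hμ : ∀ x, f (μ x) = x) (χ : ↥f.ker →* ℂˣ)
variable {A : Type} [Ring A] [Algebra ℂ A] (b : Module.Basis G ℂ A)
variable (hb : ∀ g h : G, b g * b h = ((χ (secElem f μ hμ g h) : ℂˣ) : ℂ) • b (g * h))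

noncomputable def Phi : MonoidAlgebra ℂ Gs →ₐ[ℂ] A :=
  MonoidAlgebra.lift ℂ A Gs (phi f hcent μ hμ χ b hb)

lemma Phi_of (s : Gs) :
    Phi f hcent μ hμ χ b hb (MonoidAlgebra.of ℂ Gs s)
      = ((χ (kk f μ hμ s) : ℂˣ) : ℂ) • b (f s) :=
  MonoidAlgebra.lift_of _ _

lemma Phi_of_mu (x : G) :
    Phi f hcent μ hμ χ b hb (MonoidAlgebra.of ℂ Gs (μ x)) = b x := by
  rw [Phi_of]
  have h1 : kk f μ hμ (μ x) = 1 := by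
    apply Subtype.ext
    show μ x * (μ (f (μ x)))⁻¹ = 1
    rw [hμ, mul_inv_cancel]
  rw [h1, map_one, Units.val_one, one_smul, hμ]

lemma Phi_of_ker (z : ↥f.ker) :
    Phi f hcent μ hμ χ b hb (MonoidAlgebra.of ℂ Gs (z : Gs))
      = algebraMap ℂ A ((χ z : ℂˣ) : ℂ) := by
  rw [Phi_of]
  have hz1 : f (z : Gs) = 1 := z.2
  have h1 : kk f μ hμ (z : Gs) = z * (⟨μ 1, MonoidHom.mem_ker.mpr (hμ 1)⟩ : ↥f.ker)⁻¹ := by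
    apply Subtype.ext
    show (z : Gs) * (μ (f (z : Gs)))⁻¹ = (z : Gs) * (μ 1)⁻¹
    rw [hz1]
  rw [h1, map_mul, map_inv, Units.val_mul, Units.val_inv_eq_inv_val, hz1, mul_smul,
    bone f μ hμ χ b hb, Algebra.algebraMap_eq_smul_one]

lemma Phi_surj : Function.Surjective (Phi f hcent μ hμ χ b hb) := by
  intro a
  have hle : Submodule.span ℂ (Set.range b)
      ≤ LinearMap.range (Phi f hcent μ hμ χ b hb).toLinearMap := by
    refine Submodule.span_le.mpr ?_
    rintro _ ⟨x, rfl⟩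
    exact ⟨MonoidAlgebra.of ℂ Gs (μ x), Phi_of_mu f hcent μ hμ χ b hb x⟩
  have : a ∈ LinearMap.range (Phi f hcent μ hμ χ b hb).toLinearMap :=
    hle (by rw [b.span_eq]; trivial)
  exact this

include hcent in
lemma central_of (z : ↥f.ker) (r : MonoidAlgebra ℂ Gs) :
    MonoidAlgebra.of ℂ Gs (z : Gs) * r = r * MonoidAlgebra.of ℂ Gs (z : Gs) := by
  induction r using MonoidAlgebra.induction_on with
  | of g =>
    rw [← map_mul, ← map_mul]
    exact congrArg _ (Subgroup.mem_center_iff.mp (hcent z.2) g).symm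
  | add p q hp hq => rw [mul_add, add_mul, hp, hq]
  | smul c p hp => rw [mul_smul_comm, smul_mul_assoc, hp]

include hcent in
lemma eigenAll {N : Type} [AddCommGroup N] [Module (MonoidAlgebra ℂ Gs) N]
    [IsSimpleModule (MonoidAlgebra ℂ Gs) N]
    (hlies : ∃ v : N, v ≠ 0 ∧ ∀ z : ↥f.ker,
      MonoidAlgebra.of ℂ Gs (z : Gs) • v
        = algebraMap ℂ (MonoidAlgebra ℂ Gs) ((χ z : ℂˣ) : ℂ) • v)
    (v : N) (z : ↥f.ker) :
    MonoidAlgebra.of ℂ Gs (z : Gs) • v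
      = algebraMap ℂ (MonoidAlgebra ℂ Gs) ((χ z : ℂˣ) : ℂ) • v := by
  let W : Submodule (MonoidAlgebra ℂ Gs) N :=
    { carrier := {w | ∀ z : ↥f.ker, MonoidAlgebra.of ℂ Gs (z : Gs) • w
        = algebraMap ℂ (MonoidAlgebra ℂ Gs) ((χ z : ℂˣ) : ℂ) • w}
      zero_mem' := fun z => by rw [smul_zero, smul_zero]
      add_mem' := fun ha hb z => by rw [smul_add, smul_add, ha z, hb z]
      smul_mem' := by
        intro r w hw z
        show MonoidAlgebra.of ℂ Gs (z : Gs) • (r • w)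
          = algebraMap ℂ (MonoidAlgebra ℂ Gs) ((χ z : ℂˣ) : ℂ) • (r • w)
        rw [← mul_smul, central_of f hcent z r, mul_smul, hw z, ← mul_smul,
          ← Algebra.commutes, mul_smul] }
  have hWtop : W = ⊤ := by
    rcases eq_bot_or_eq_top W with h | h
    · exfalso
      obtain ⟨v0, hv0, hv0'⟩ := hlies
      have : v0 ∈ W := hv0'
      rw [h] at this
      exact hv0 this
    · exact h
  have hv : v ∈ W := by rw [hWtop]; trivial
  exact hv z

include hcent in
lemma annih {N : Type} [AddCommGroup N] [Module (MonoidAlgebra ℂ Gs) N]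
    [IsSimpleModule (MonoidAlgebra ℂ Gs) N]
    (hlies : ∃ v : N, v ≠ 0 ∧ ∀ z : ↥f.ker,
      MonoidAlgebra.of ℂ Gs (z : Gs) • v
        = algebraMap ℂ (MonoidAlgebra ℂ Gs) ((χ z : ℂˣ) : ℂ) • v)
    (r : MonoidAlgebra ℂ Gs) (hr : Phi f hcent μ hμ χ b hb r = 0) (v : N) :
    r • v = 0 := by
  classical
  let Ψ : A →ₗ[ℂ] MonoidAlgebra ℂ Gs := b.constr ℂ (fun x => MonoidAlgebra.of ℂ Gs (μ x))
  have claim : ∀ (r : MonoidAlgebra ℂ Gs) (v : N),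
      r • v = (Ψ (Phi f hcent μ hμ χ b hb r)) • v := by
    intro r
    induction r using MonoidAlgebra.induction_on with
    | of s =>
      intro v
      have hdecomp : ((kk f μ hμ s : ↥f.ker) : Gs) * μ (f s) = s := by
        show s * (μ (f s))⁻¹ * μ (f s) = s
        rw [inv_mul_cancel_right]
      rw [Phi_of, map_smul, Module.Basis.constr_basis]
      conv_lhs => rw [← hdecomp]
      rw [map_mul, mul_smul,
        eigenAll f hcent χ hlies (MonoidAlgebra.of ℂ Gs (μ (f s)) • v) (kk f μ hμ s),
        Algebra.smul_def, mul_smul]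
    | add p q hp hq =>
      intro v
      rw [add_smul, hp v, hq v, map_add, map_add, add_smul]
    | smul c p hp =>
      intro v
      rw [map_smul, map_smul, Algebra.smul_def, Algebra.smul_def (A := MonoidAlgebra ℂ Gs),
        mul_smul, mul_smul, hp v]
  rw [claim r v, hr, map_zero, zero_smul]

end Main2

section Assemble
variable {Gs G : Type} [Group Gs] [Group G]
variable (f : Gs →* G) (hcent : f.ker ≤ Subgroup.center Gs)
  (μ : G → Gs) (hμ : ∀ x, f (μ x) = x) (χ : ↥f.ker →* ℂˣ)
variable {A : Type} [Ring A] [Algebra ℂ A] (b : Module.Basis G ℂ A)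
variable (hb : ∀ g h : G, b g * b h = ((χ (secElem f μ hμ g h) : ℂˣ) : ℂ) • b (g * h))

/-- abbreviation for the ring hom. -/
noncomputable def piRH : MonoidAlgebra ℂ Gs →+* A := (Phi f hcent μ hμ χ b hb).toRingHom

lemma piRH_surj : Function.Surjective (piRH f hcent μ hμ χ b hb) :=
  Phi_surj f hcent μ hμ χ b hb

noncomputable def Fmap
    (M : {M : ModuleCat.{0} A // IsSimpleModule A M}) :
    {N : ModuleCat.{0} (MonoidAlgebra ℂ Gs) //
        IsSimpleModule (MonoidAlgebra ℂ Gs) N ∧ liesOver f.ker χ N} :=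
  ⟨@ModuleCat.of (MonoidAlgebra ℂ Gs) _ M.1 _
      (Module.compHom M.1 (piRH f hcent μ hμ χ b hb)), by
    constructor
    · exact (simple_transfer (piRH f hcent μ hμ χ b hb) (piRH_surj f hcent μ hμ χ b hb)
        inferInstance (Module.compHom M.1 (piRH f hcent μ hμ χ b hb))
        (fun r v => rfl)).mpr M.2
    · haveI := M.2
      haveI : Nontrivial M.1 := IsSimpleModule.nontrivial A M.1
      obtain ⟨v, hv⟩ := exists_ne (0 : M.1)
      refine ⟨v, hv, fun z => ?_⟩
      show (Phi f hcent μ hμ χ b hb) (MonoidAlgebra.of ℂ Gs (z : Gs)) • v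
          = (Phi f hcent μ hμ χ b hb)
              (algebraMap ℂ (MonoidAlgebra ℂ Gs) ((χ z : ℂˣ) : ℂ)) • v
      rw [Phi_of_ker, AlgHom.commutes]⟩

lemma h0map
    (N : {N : ModuleCat.{0} (MonoidAlgebra ℂ Gs) //
        IsSimpleModule (MonoidAlgebra ℂ Gs) N ∧ liesOver f.ker χ N})
    (r : MonoidAlgebra ℂ Gs) (hr : piRH f hcent μ hμ χ b hb r = 0) (v : N.1) :
    r • v = 0 :=
  haveI := N.2.1
  annih f hcent μ hμ χ b hb N.2.2 r hr v

noncomputable def Gmap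
    (N : {N : ModuleCat.{0} (MonoidAlgebra ℂ Gs) //
        IsSimpleModule (MonoidAlgebra ℂ Gs) N ∧ liesOver f.ker χ N}) :
    {M : ModuleCat.{0} A // IsSimpleModule A M} :=
  ⟨@ModuleCat.of A _ N.1 _
      (extModule (piRH f hcent μ hμ χ b hb) (piRH_surj f hcent μ hμ χ b hb)
        (h0map f hcent μ hμ χ b hb N)), by
    exact (simple_transfer (piRH f hcent μ hμ χ b hb) (piRH_surj f hcent μ hμ χ b hb)
      (extModule (piRH f hcent μ hμ χ b hb) (piRH_surj f hcent μ hμ χ b hb)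
        (h0map f hcent μ hμ χ b hb N)) inferInstance
      (fun r v => (choose_smul (piRH f hcent μ hμ χ b hb) (piRH_surj f hcent μ hμ χ b hb)
        (h0map f hcent μ hμ χ b hb N) r v).symm)).mp N.2.1⟩

noncomputable def GFequiv (M : {M : ModuleCat.{0} A // IsSimpleModule A M}) :
    ((Gmap f hcent μ hμ χ b hb (Fmap f hcent μ hμ χ b hb M)).1 ≃ₗ[A] M.1) where
  toFun := id
  invFun := id
  left_inv _ := rfl
  right_inv _ := rfl
  map_add' _ _ := rfl
  map_smul' a v := by
    show (piRH f hcent μ hμ χ b hb)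
        ((piRH_surj f hcent μ hμ χ b hb a).choose) • (show ↑M.1 from v)
        = a • (show ↑M.1 from v)
    rw [(piRH_surj f hcent μ hμ χ b hb a).choose_spec]

noncomputable def FGequiv
    (N : {N : ModuleCat.{0} (MonoidAlgebra ℂ Gs) //
        IsSimpleModule (MonoidAlgebra ℂ Gs) N ∧ liesOver f.ker χ N}) :
    ((Fmap f hcent μ hμ χ b hb (Gmap f hcent μ hμ χ b hb N)).1
      ≃ₗ[MonoidAlgebra ℂ Gs] N.1) where
  toFun := id
  invFun := id
  left_inv _ := rfl
  right_inv _ := rfl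
  map_add' _ _ := rfl
  map_smul' r v := by
    show ((piRH_surj f hcent μ hμ χ b hb) ((piRH f hcent μ hμ χ b hb) r)).choose
        • (show ↑N.1 from v) = r • (show ↑N.1 from v)
    exact choose_smul (piRH f hcent μ hμ χ b hb) (piRH_surj f hcent μ hμ χ b hb)
      (h0map f hcent μ hμ χ b hb N) r v

end Assemble

theorem stmt_10 (Gs G : Type) [Group Gs] [Group G] [Fintype Gs] [Fintype G]
    (f : Gs →* G) (hsurj : Function.Surjective f)
    (hcent : f.ker ≤ Subgroup.center Gs) (hder : f.ker ≤ commutator Gs)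
    (μ : G → Gs) (hμ : ∀ x, f (μ x) = x)
    (hcoc : ∀ χ : ↥f.ker →* ℂˣ, (fun x y => χ (secElem f μ hμ x y)) ∈ Z2 G)
    (htra : Function.Bijective fun χ : ↥f.ker →* ℂˣ =>
      (QuotientGroup.mk ⟨fun x y => χ (secElem f μ hμ x y), hcoc χ⟩ : H2 G))
    (χ : ↥f.ker →* ℂˣ)
    (A : Type) [Ring A] [Algebra ℂ A]
    (hA : IsTwistedGroupAlgebra G (fun x y => χ (secElem f μ hμ x y)) A) :
    Nonempty (modClasses A (fun M => IsSimpleModule A M) ≃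
      modClasses (MonoidAlgebra ℂ Gs)
        (fun M => IsSimpleModule (MonoidAlgebra ℂ Gs) M ∧ liesOver f.ker χ M)) := by
  classical
  obtain ⟨b, hb⟩ := hA
  have hb' : ∀ g h : G, b g * b h = ((χ (secElem f μ hμ g h) : ℂˣ) : ℂ) • b (g * h) := hb
  clear hb
  have hb := hb'
  have hF : ∀ (M M' : {M : ModuleCat.{0} A // IsSimpleModule A M}),
      Nonempty (M.1 ≃ₗ[A] M'.1) →
      Nonempty ((Fmap f hcent μ hμ χ b hb M).1
        ≃ₗ[MonoidAlgebra ℂ Gs] (Fmap f hcent μ hμ χ b hb M').1) := by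
    rintro M M' ⟨e⟩
    exact ⟨{ toFun := e, invFun := e.symm, left_inv := e.left_inv,
             right_inv := e.right_inv, map_add' := e.map_add,
             map_smul' := fun r v => e.map_smul (piRH f hcent μ hμ χ b hb r) v }⟩
  have hG : ∀ (N N' : {N : ModuleCat.{0} (MonoidAlgebra ℂ Gs) //
        IsSimpleModule (MonoidAlgebra ℂ Gs) N ∧ liesOver f.ker χ N}),
      Nonempty (N.1 ≃ₗ[MonoidAlgebra ℂ Gs] N'.1) →
      Nonempty ((Gmap f hcent μ hμ χ b hb N).1 ≃ₗ[A] (Gmap f hcent μ hμ χ b hb N').1) := by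
    rintro N N' ⟨e⟩
    exact ⟨{ toFun := e, invFun := e.symm, left_inv := e.left_inv,
             right_inv := e.right_inv, map_add' := e.map_add,
             map_smul' := fun a v =>
               e.map_smul ((piRH_surj f hcent μ hμ χ b hb a).choose) v }⟩
  refine ⟨⟨Quotient.map (Fmap f hcent μ hμ χ b hb) hF,
           Quotient.map (Gmap f hcent μ hμ χ b hb) hG, ?_, ?_⟩⟩
  · intro q
    exact Quotient.inductionOn q fun M =>
      Quotient.sound ⟨GFequiv f hcent μ hμ χ b hb M⟩
  · intro q
    exact Quotient.inductionOn q fun N =>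
      Quotient.sound ⟨FGequiv f hcent μ hμ χ b hb N⟩
end

section
/- Let G be a finite group with a representation group G̃, i.e. a central extension 1 → Z → G̃ → G → 1 with Z ⊆ Z(G̃) ∩ G̃' and transgression tra : Hom(Z, ℂˣ) → H²(G, ℂˣ) an isomorphism. Then the complex group algebra of G̃ decomposes as ℂG̃ ≅ ∏_{[α] ∈ H²(G, ℂˣ)} ℂ^α G, a product of the twisted group algebras of G over all cohomology classes. -/
/-- The unit of a twisted group algebra. -/
lemma twisted_one {G A : Type*} [Group G] [Ring A] [Algebra ℂ A]
    {α : G → G → ℂˣ} (hα : IsCocycle α) (e : Module.Basis G ℂ A)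
    (he : ∀ g h : G, e g * e h = (α g h : ℂ) • e (g * h)) :
    (((α 1 1)⁻¹ : ℂˣ) : ℂ) • e 1 = (1 : A) := by
  have hconst : ∀ g : G, α 1 g = α 1 1 := by
    intro g
    have h := hα 1 1 g
    simp only [one_mul] at h
    have : α 1 g * α 1 1 = α 1 g * α 1 g := by rw [mul_comm] at h; exact h
    exact (mul_left_cancel this).symm
  set u : A := (((α 1 1)⁻¹ : ℂˣ) : ℂ) • e 1 with hu
  have key : ∀ g : G, u * e g = e g := by
    intro g
    rw [hu, smul_mul_assoc, he, one_mul, hconst g, smul_smul]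
    norm_num
  have hL : LinearMap.mulLeft ℂ u = LinearMap.id := by
    apply e.ext
    intro g
    simpa using key g
  have := congrArg (fun (L : A →ₗ[ℂ] A) => L 1) hL
  simpa using this
lemma twisted_of_cohomologous {G : Type} [Group G] (α β : ↥(Z2 G))
    (h : (QuotientGroup.mk α : H2 G) = QuotientGroup.mk β)
    (A : Type) [Ring A] [Algebra ℂ A] (hA : IsTwistedGroupAlgebra G β.1 A) :
    IsTwistedGroupAlgebra G α.1 A := by
  obtain ⟨b, hb⟩ := hA
  rw [QuotientGroup.eq] at h
  rw [Subgroup.mem_comap] at h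
  obtain ⟨ν, hν⟩ := h
  have hβ : ∀ g h : G, β.1 g h = α.1 g h * (ν g * ν h * (ν (g * h))⁻¹) := by
    intro g h
    have := congrFun (congrFun hν g) h
    simp only [B2hom, MonoidHom.coe_mk, OneHom.coe_mk, Subgroup.coe_subtype,
      Subgroup.coe_mul, InvMemClass.coe_inv, Pi.mul_apply, Pi.inv_apply] at this
    rw [this]
    group
  refine ⟨b.unitsSMul fun g => (ν g)⁻¹, ?_⟩
  intro g h
  rw [Module.Basis.unitsSMul_apply, Module.Basis.unitsSMul_apply, Module.Basis.unitsSMul_apply,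
    Units.smul_def, Units.smul_def, Units.smul_def, smul_mul_smul_comm, hb, smul_smul, smul_smul]
  congr 1
  have hβℂ : ((β.1 g h : ℂˣ) : ℂ) = (α.1 g h : ℂ) * ((ν g : ℂ) * (ν h : ℂ) * ((ν (g * h) : ℂ))⁻¹) := by
    exact_mod_cast congrArg Units.val (hβ g h)
  simp only [Units.val_inv_eq_inv_val]
  rw [hβℂ]
  field_simp
open Module in
theorem stmt_11 (Gs G : Type) [Group Gs] [Group G] [Fintype Gs] [Fintype G]
    (f : Gs →* G) (hsurj : Function.Surjective f)
    (hcent : f.ker ≤ Subgroup.center Gs) (hder : f.ker ≤ commutator Gs)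
    (μ : G → Gs) (hμ : ∀ x, f (μ x) = x)
    (hcoc : ∀ χ : ↥f.ker →* ℂˣ, (fun x y => χ (secElem f μ hμ x y)) ∈ Z2 G)
    (htra : Function.Bijective fun χ : ↥f.ker →* ℂˣ =>
      (QuotientGroup.mk ⟨fun x y => χ (secElem f μ hμ x y), hcoc χ⟩ : H2 G))
    (B : ↥(Z2 G) → Type) [∀ β, Ring (B β)] [∀ β, Algebra ℂ (B β)]
    (hB : ∀ β, IsTwistedGroupAlgebra G β.1 (B β)) :
    Nonempty (MonoidAlgebra ℂ Gs ≃ₐ[ℂ] ∀ c : H2 G, B (Quotient.out c)) := by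
  classical
  -- the kernel is commutative
  letI : CommGroup ↥f.ker :=
    { (inferInstance : Group ↥f.ker) with
      mul_comm := fun a b => Subtype.ext ((Subgroup.mem_center_iff.mp (hcent a.2) b.1).symm) }
  haveI : NeZero ((Monoid.exponent ↥f.ker : ℂ)) :=
    ⟨by exact_mod_cast Monoid.exponent_ne_zero_of_finite⟩
  obtain ⟨dE⟩ := CommGroup.monoidHom_mulEquiv_of_hasEnoughRootsOfUnity (↥f.ker) ℂ
  haveI : Finite (↥f.ker →* ℂˣ) := Finite.of_equiv _ dE.symm.toEquiv
  let τ : (↥f.ker →* ℂˣ) ≃ H2 G := Equiv.ofBijective _ htra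
  haveI : Finite (H2 G) := Finite.of_surjective τ τ.surjective
  haveI : Fintype (H2 G) := Fintype.ofFinite _
  -- the cocycle attached to a character
  let α : (↥f.ker →* ℂˣ) → ↥(Z2 G) := fun χ => ⟨fun x y => χ (secElem f μ hμ x y), hcoc χ⟩
  -- rescaled bases
  have key : ∀ c : H2 G, ∃ e : Module.Basis G ℂ (B (Quotient.out c)),
      ∀ g h : G, e g * e h = ((τ.symm c) (secElem f μ hμ g h) : ℂ) • e (g * h) := by
    intro c
    have h1 : (QuotientGroup.mk (α (τ.symm c)) : H2 G) = QuotientGroup.mk (Quotient.out c) := by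
      have h2 : (QuotientGroup.mk (α (τ.symm c)) : H2 G) = τ (τ.symm c) := rfl
      rw [h2, Equiv.apply_symm_apply]
      exact (QuotientGroup.out_eq' c).symm
    obtain ⟨e, he⟩ := twisted_of_cohomologous _ _ h1 _ (hB (Quotient.out c))
    exact ⟨e, he⟩
  choose e he using key
  -- the element of the kernel attached to a group element
  have hzmem : ∀ a : Gs, a * (μ (f a))⁻¹ ∈ f.ker := fun a => by
    simp [MonoidHom.mem_ker, hμ]
  let z : Gs → ↥f.ker := fun a => ⟨a * (μ (f a))⁻¹, hzmem a⟩
  have hza : ∀ a : Gs, (z a : Gs) * μ (f a) = a := fun a => by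
    simp [z]
  have hcomm : ∀ (k : Gs), k ∈ f.ker → ∀ g : Gs, g * k = k * g := fun k hk g =>
    (Subgroup.mem_center_iff.mp (hcent hk) g)
  -- z of a product
  have hzmul : ∀ a b : Gs, z (a * b) = z a * z b * secElem f μ hμ (f a) (f b) := by
    intro a b
    apply Subtype.ext
    show a * b * (μ (f (a * b)))⁻¹ =
      (a * (μ (f a))⁻¹) * (b * (μ (f b))⁻¹) * (μ (f a) * μ (f b) * (μ (f a * f b))⁻¹)
    rw [map_mul]
    have h1 : (a * (μ (f a))⁻¹) * (b * (μ (f b))⁻¹) * (μ (f a) * μ (f b) * (μ (f a * f b))⁻¹)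
        = a * ((μ (f a))⁻¹ * (b * (μ (f b))⁻¹) * μ (f a)) * μ (f b) * (μ (f a * f b))⁻¹ := by
      group
    rw [h1, hcomm _ (hzmem b) ((μ (f a))⁻¹)]
    group
  -- z of elements of the form k * μ x
  have hzk : ∀ (k : ↥f.ker) (x : G), z ((k : Gs) * μ x) = k := by
    intro k x
    apply Subtype.ext
    show (k : Gs) * μ x * (μ (f ((k : Gs) * μ x)))⁻¹ = k
    have : f ((k : Gs) * μ x) = x := by
      simp [MonoidHom.mem_ker.mp k.2, hμ]
    rw [this, mul_inv_cancel_right]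
  have hfk : ∀ (k : ↥f.ker) (x : G), f ((k : Gs) * μ x) = x := by
    intro k x
    simp [MonoidHom.mem_ker.mp k.2, hμ]
  -- the monoid homomorphism
  have hone : ∀ c : H2 G, ((τ.symm c (z 1) : ℂ) • e c (f 1) : B (Quotient.out c)) = 1 := by
    intro c
    have hz1 : z 1 = (secElem f μ hμ 1 1)⁻¹ := by
      apply Subtype.ext
      show (1 : Gs) * (μ (f 1))⁻¹ = (μ 1 * μ 1 * (μ (1 * 1))⁻¹)⁻¹
      rw [map_one]
      group
    rw [map_one f, hz1, map_inv]
    exact twisted_one (hcoc (τ.symm c)) (e c) (he c)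
  let Φ₀ : Gs →* (∀ c : H2 G, B (Quotient.out c)) :=
    { toFun := fun a c => ((τ.symm c) (z a) : ℂ) • e c (f a)
      map_one' := by funext c; exact hone c
      map_mul' := by
        intro a b
        funext c
        show ((τ.symm c) (z (a * b)) : ℂ) • e c (f (a * b)) =
          (((τ.symm c) (z a) : ℂ) • e c (f a)) * (((τ.symm c) (z b) : ℂ) • e c (f b))
        rw [smul_mul_smul_comm, he c, hzmul, map_mul (f := f), map_mul, map_mul, smul_smul]
        push_cast
        ring_nf }
  let Φ : MonoidAlgebra ℂ Gs →ₐ[ℂ] ∀ c : H2 G, B (Quotient.out c) :=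
    (MonoidAlgebra.lift ℂ _ Gs) Φ₀
  have hinj : Function.Injective Φ := by
    rw [injective_iff_map_eq_zero]
    intro v hv
    have hEbij : Function.Bijective (fun p : ↥f.ker × G => (p.1 : Gs) * μ p.2) := by
      constructor
      · rintro ⟨k, y⟩ ⟨k', y'⟩ hEq
        simp only at hEq
        have hy : y = y' := by
          have := congrArg f hEq
          simpa [hfk] using this
        subst hy
        have : (k : Gs) = k' := mul_right_cancel hEq
        exact Prod.ext (Subtype.ext this) rfl
      · intro a; exact ⟨(z a, f a), hza a⟩
    have hcoord : ∀ (χ : ↥f.ker →* ℂˣ) (x : G),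
        ∑ k : ↥f.ker, v.coeff ((k : Gs) * μ x) * (χ k : ℂ) = 0 := by
      intro χ x
      set c := τ χ with hc
      have hτ : τ.symm c = χ := Equiv.symm_apply_apply τ χ
      have h1 : Φ v c = 0 := by rw [hv]; rfl
      have h3 : ∑ a : Gs, v.coeff a • (((τ.symm c) (z a) : ℂ) • e c (f a)) = 0 := by
        rw [← h1]
        show _ = ((MonoidAlgebra.lift ℂ _ Gs) Φ₀ v) c
        rw [MonoidAlgebra.lift_apply, Finsupp.sum_fintype _ _ (by intro a; simp),
          Finset.sum_apply]
        rfl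
      have h4 := congrArg (fun w => ((e c).repr w) x) h3
      simp only [map_sum, Finset.sum_apply', map_smul, Basis.repr_self, Finsupp.smul_apply,
        Finsupp.single_apply, smul_eq_mul, Finsupp.coe_zero, Pi.zero_apply,
        mul_ite, mul_one, mul_zero, map_zero] at h4
      have hre : ∑ p : ↥f.ker × G, (if p.2 = x then v.coeff ((p.1 : Gs) * μ p.2) * (χ p.1 : ℂ) else 0)
          = ∑ a : Gs, (if f a = x then v.coeff a * ((τ.symm c) (z a) : ℂ) else 0) :=
        Fintype.sum_bijective _ hEbij _ _ (by rintro ⟨k, y⟩; simp [hfk, hzk, hτ])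
      have h6 : ∑ k : ↥f.ker, v.coeff ((k : Gs) * μ x) * (χ k : ℂ)
          = ∑ a : Gs, (if f a = x then v.coeff a * ((τ.symm c) (z a) : ℂ) else 0) := by
        rw [← hre, Fintype.sum_prod_type]
        simp [Finset.sum_ite_eq']
      rw [h6]
      convert h4 using 2 with a
    have hker : ∀ (x : G) (k : ↥f.ker), v.coeff ((k : Gs) * μ x) = 0 := by
      intro x
      haveI : Fintype (↥f.ker →* ℂˣ) := Fintype.ofFinite _
      haveI : Nonempty (↥f.ker →* ℂˣ) := ⟨1⟩
      have hjinj : Function.Injective (fun χ : ↥f.ker →* ℂˣ => (Units.coeHom ℂ).comp χ) := by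
        intro χ χ' hEq
        ext k
        exact DFunLike.congr_fun hEq k
      have hind : LinearIndependent ℂ
          (fun (χ : ↥f.ker →* ℂˣ) => (((Units.coeHom ℂ).comp χ : ↥f.ker →* ℂ) : ↥f.ker → ℂ)) :=
        (linearIndependent_monoidHom (↥f.ker) ℂ).comp _ hjinj
      have hcard : Fintype.card (↥f.ker →* ℂˣ) = Module.finrank ℂ (↥f.ker → ℂ) := by
        rw [Module.finrank_pi]
        exact Fintype.card_congr dE.toEquiv
      let bZ := basisOfLinearIndependentOfCardEqFinrank hind hcard
      let L : (↥f.ker → ℂ) →ₗ[ℂ] ℂ :=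
        ∑ k : ↥f.ker, v.coeff ((k : Gs) * μ x) • LinearMap.proj k
      have hL : ∀ w : ↥f.ker → ℂ, L w = ∑ k : ↥f.ker, v.coeff ((k : Gs) * μ x) * w k := by
        intro w
        simp [L, LinearMap.sum_apply]
      have hL0 : L = 0 := by
        apply bZ.ext
        intro χ
        have hb : bZ χ = fun k => (χ k : ℂ) := by
          rw [congrFun (coe_basisOfLinearIndependentOfCardEqFinrank hind hcard) χ]
          rfl
        rw [hb, hL]
        simpa using hcoord χ x
      intro k
      have h5 : L (Pi.single k 1) = 0 := by rw [hL0]; simp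
      rw [hL] at h5
      simpa [Pi.single_apply, mul_ite, Finset.sum_ite_eq'] using h5
    ext a
    have := hker (f a) (z a)
    rwa [hza a] at this
  have hcardGs : Fintype.card Gs = Fintype.card (H2 G) * Fintype.card G := by
    have h1 : Nat.card Gs = Nat.card (Gs ⧸ f.ker) * Nat.card f.ker :=
      Subgroup.card_eq_card_quotient_mul_card_subgroup f.ker
    have h2 : Nat.card (Gs ⧸ f.ker) = Nat.card G :=
      Nat.card_congr (QuotientGroup.quotientKerEquivOfSurjective f hsurj).toEquiv
    have h3 : Nat.card ↥f.ker = Nat.card (H2 G) :=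
      (Nat.card_congr dE.toEquiv).symm.trans (Nat.card_congr τ)
    rw [← Nat.card_eq_fintype_card, ← Nat.card_eq_fintype_card, ← Nat.card_eq_fintype_card]
    rw [h1, h2, h3, mul_comm]
  haveI : ∀ c : H2 G, Module.Free ℂ (B (Quotient.out c)) := fun c => Module.Free.of_basis (e c)
  haveI : ∀ c : H2 G, FiniteDimensional ℂ (B (Quotient.out c)) := fun c =>
    Module.Finite.of_basis (e c)
  have hdim : finrank ℂ (MonoidAlgebra ℂ Gs) = finrank ℂ (∀ c : H2 G, B (Quotient.out c)) := by
    rw [Module.finrank_pi_fintype ℂ]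
    have hb1 : finrank ℂ (MonoidAlgebra ℂ Gs) = Fintype.card Gs :=
      Module.finrank_eq_card_basis (MonoidAlgebra.basis Gs ℂ)
    have hb2 : ∀ c : H2 G, finrank ℂ (B (Quotient.out c)) = Fintype.card G := fun c =>
      Module.finrank_eq_card_basis (e c)
    simp only [hb1, hb2, Finset.sum_const, Finset.card_univ, smul_eq_mul]
    exact hcardGs
  haveI : FiniteDimensional ℂ (MonoidAlgebra ℂ Gs) :=
    Module.Finite.of_basis (MonoidAlgebra.basis Gs ℂ)
  have hsurjΦ : Function.Surjective Φ :=
    (LinearMap.injective_iff_surjective_of_finrank_eq_finrank (f := Φ.toLinearMap) hdim).mp hinj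
  exact ⟨AlgEquiv.ofBijective Φ ⟨hinj, hsurjΦ⟩⟩
end

section
/- Let p be a prime and let G̃ be the group of order p⁶ given by the presentation ⟨α₁, α₂, β | [α₁, α₂] = β, α₁^{p²} = β, α₂^{p²} = 1, β^{p²} = 1, β central ⟩. Then N = ⟨α₁^p, α₂^p⟩ is an abelian normal subgroup of G̃ of order p⁴, and for a character χ of N with χ(α₁^{p³}) a primitive p-th root of unity, the inertia group I_{G̃}(χ) equals N. -/
private lemma zpow_reduce' {G : Type*} [Group G] {x : G} {n : ℕ} (hn : 0 < n)
    (hx : x ^ n = 1) (i : ℤ) : ∃ r : ℕ, r < n ∧ x ^ i = x ^ r := by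
  have h0 : (0:ℤ) < (n:ℤ) := by exact_mod_cast hn
  have h2 := Int.emod_nonneg i h0.ne'
  have h1 := Int.emod_lt_of_pos i h0
  refine ⟨(i % n).toNat, by omega, ?_⟩
  have hx' : x ^ (n:ℤ) = 1 := by rw [zpow_natCast, hx]
  calc x ^ i = x ^ ((n:ℤ) * (i / n) + i % n) := by rw [Int.mul_ediv_add_emod]
  _ = (x ^ (n:ℤ)) ^ (i / (n:ℤ)) * x ^ (i % n) := by rw [zpow_add, ← zpow_mul]
  _ = x ^ (i % n) := by rw [hx']; simp
  _ = x ^ ((i % n).toNat) := by rw [← zpow_natCast, Int.toNat_of_nonneg h2]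

private lemma mem_closure_pair' {G : Type*} [Group G] {x y : G} (h : Commute x y) {g : G}
    (hg : g ∈ Subgroup.closure {x, y}) : ∃ i j : ℤ, g = x ^ i * y ^ j := by
  induction hg using Subgroup.closure_induction with
  | mem z hz =>
    rcases hz with rfl | rfl
    · exact ⟨1, 0, by simp⟩
    · exact ⟨0, 1, by simp⟩
  | one => exact ⟨0, 0, by simp⟩
  | mul u v hu hv ihu ihv =>
    obtain ⟨i, j, rfl⟩ := ihu
    obtain ⟨k, l, rfl⟩ := ihv
    refine ⟨i + k, j + l, ?_⟩
    have hc : Commute (y ^ j) (x ^ k) := (h.symm.zpow_zpow j k)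
    rw [zpow_add, zpow_add]
    calc x ^ i * y ^ j * (x ^ k * y ^ l) = x ^ i * (y ^ j * x ^ k) * y ^ l := by group
    _ = x ^ i * (x ^ k * y ^ j) * y ^ l := by rw [hc]
    _ = x ^ i * x ^ k * (y ^ j * y ^ l) := by group
  | inv u hu ihu =>
    obtain ⟨i, j, rfl⟩ := ihu
    refine ⟨-i, -j, ?_⟩
    have hc : Commute (y ^ (-j)) (x ^ (-i)) := (h.symm.zpow_zpow _ _)
    rw [mul_inv_rev, ← zpow_neg, ← zpow_neg, hc]

private lemma conj_flip {G : Type*} [Group G] {u v w : G}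
    (h : v⁻¹ * u * v = u * w) : u⁻¹ * v * u = v * w⁻¹ := by
  have h1 : u * v = v * (u * w) := by rw [← h]; group
  have h2 : v * u = u * v * w⁻¹ := by rw [h1]; group
  rw [mul_assoc, h2]; group

theorem stmt_16 (p : ℕ) (hp : p.Prime) (Gt : Type) [Group Gt] [Fintype Gt]
    (a b c : Gt)
    (hrel1 : a⁻¹ * b⁻¹ * a * b = c)
    (hrel2 : a ^ (p ^ 2) = c) (hrel3 : b ^ (p ^ 2) = 1) (hrel4 : c ^ (p ^ 2) = 1)
    (hcentral : ∀ g : Gt, c * g = g * c)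
    (hgen : Subgroup.closure {a, b} = ⊤)
    (hcard : Fintype.card Gt = p ^ 6)
    (N : Subgroup Gt) (hNdef : N = Subgroup.closure {a ^ p, b ^ p})
    (χ : ↥N →* ℂˣ) (hmem : a ^ (p ^ 3) ∈ N)
    (hprim : IsPrimitiveRoot (χ ⟨a ^ (p ^ 3), hmem⟩) p) :
    N.Normal ∧ (∀ x y : ↥N, x * y = y * x) ∧ Nat.card ↥N = p ^ 4 ∧
      (∀ g : Gt, g ∈ N ↔
        ∀ (n : ↥N) (h : g⁻¹ * ↑n * g ∈ N), χ ⟨g⁻¹ * ↑n * g, h⟩ = χ n) := by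
  have hcm : ∀ g : Gt, Commute c g := fun g => hcentral g
  have hbab : b⁻¹ * a * b = a * c := by rw [← hrel1]; group
  have haba : a⁻¹ * b * a = b * c⁻¹ := conj_flip hbab
  have hconj1 : ∀ i : ℤ, b⁻¹ * a ^ i * b = a ^ i * c ^ i := by
    intro i
    have e1 : b⁻¹ * a ^ i * b = (b⁻¹ * a * b) ^ i := by
      have := conj_zpow (i := i) (a := b⁻¹) (b := a)
      simpa using this.symm
    rw [e1, hbab, (hcm a).symm.mul_zpow]
  have hconj3 : ∀ j : ℤ, a⁻¹ * b ^ j * a = b ^ j * c ^ (-j) := by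
    intro j
    have e1 : a⁻¹ * b ^ j * a = (a⁻¹ * b * a) ^ j := by
      have := conj_zpow (i := j) (a := a⁻¹) (b := b)
      simpa using this.symm
    rw [e1, haba, (hcm b).symm.inv_right.mul_zpow, ← zpow_neg_one, ← zpow_mul]
    ring_nf
  have hconj4 : ∀ j : ℤ, (b ^ j)⁻¹ * a * b ^ j = a * c ^ j := by
    intro j
    have h := conj_flip (hconj3 j)
    simp only [zpow_neg, inv_inv] at h ⊢
    exact h
  have hconj2 : ∀ i : ℤ, (a ^ i)⁻¹ * b * a ^ i = b * c ^ (-i) := by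
    intro i
    have h := conj_flip (hconj1 i)
    simp only [zpow_neg, inv_inv] at h ⊢
    exact h
  -- conjugation of the generators of N by powers of a and b
  have hconjX : ∀ j : ℤ, (b ^ j)⁻¹ * a ^ p * b ^ j = a ^ p * c ^ ((p : ℤ) * j) := by
    intro j
    have e1 : (b ^ j)⁻¹ * a ^ p * b ^ j = ((b ^ j)⁻¹ * a * b ^ j) ^ p := by
      have := conj_pow (i := p) (a := (b ^ j)⁻¹) (b := a)
      simpa using this.symm
    rw [e1, hconj4, ((hcm a).symm.zpow_right j).mul_pow, ← zpow_natCast (c ^ j) p,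
      ← zpow_mul, mul_comm j (p : ℤ)]
  have hconjY : ∀ i : ℤ, (a ^ i)⁻¹ * b ^ p * a ^ i = b ^ p * c ^ (-((p : ℤ) * i)) := by
    intro i
    have e1 : (a ^ i)⁻¹ * b ^ p * a ^ i = ((a ^ i)⁻¹ * b * a ^ i) ^ p := by
      have := conj_pow (i := p) (a := (a ^ i)⁻¹) (b := b)
      simpa using this.symm
    rw [e1, hconj2, ((hcm b).symm.zpow_right (-i)).mul_pow, ← zpow_natCast (c ^ (-i)) p,
      ← zpow_mul]
    ring_nf
  -- memberships
  have hxN : a ^ p ∈ N := by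
    rw [hNdef]; exact Subgroup.subset_closure (Set.mem_insert _ _)
  have hyN : b ^ p ∈ N := by
    rw [hNdef]; exact Subgroup.subset_closure (Set.mem_insert_of_mem _ rfl)
  have hcN : c ∈ N := by
    have : c = (a ^ p) ^ p := by rw [← pow_mul, ← pow_two, hrel2]
    rw [this]; exact pow_mem hxN p
  -- the generators of N commute
  have hxy : Commute (a ^ p) (b ^ p) := by
    have h := hconjX (p : ℤ)
    have hc2 : c ^ ((p : ℤ) * (p : ℤ)) = 1 := by
      rw [← Int.natCast_mul, zpow_natCast, ← pow_two, hrel4]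
    rw [hc2, mul_one, zpow_natCast] at h
    show a ^ p * b ^ p = b ^ p * a ^ p
    have e : a ^ p * b ^ p = b ^ p * ((b ^ p)⁻¹ * a ^ p * b ^ p) := by group
    rw [e, h]
  -- N is commutative
  have hNc : ∀ u ∈ N, ∀ v ∈ N, u * v = v * u := by
    intro u hu v hv
    rw [hNdef] at hu hv
    obtain ⟨i, j, rfl⟩ := mem_closure_pair' hxy hu
    obtain ⟨k, l, rfl⟩ := mem_closure_pair' hxy hv
    exact (((Commute.refl (a ^ p)).zpow_zpow i k).mul_right
      ((hxy.zpow_zpow i l))).mul_left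
      (((hxy.symm.zpow_zpow j k)).mul_right ((Commute.refl (b ^ p)).zpow_zpow j l))
  -- conjugation stability criterion
  have hconj_mem : ∀ g : Gt, g⁻¹ * (a ^ p) * g ∈ N → g⁻¹ * (b ^ p) * g ∈ N →
      ∀ n ∈ N, g⁻¹ * n * g ∈ N := by
    intro g h1 h2 n hn
    have hle : N ≤ N.comap (MulAut.conj g⁻¹).toMonoidHom := by
      nth_rewrite 1 [hNdef]
      rw [Subgroup.closure_le]
      rintro z (rfl | rfl) <;>
        simp only [Set.mem_setOf_eq, SetLike.mem_coe, Subgroup.mem_comap,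
          MulEquiv.coe_toMonoidHom, MulAut.conj_apply, inv_inv]
      · exact h1
      · exact h2
    have := hle hn
    simpa only [Subgroup.mem_comap, MulEquiv.coe_toMonoidHom, MulAut.conj_apply,
      inv_inv] using this
  -- conjugation by a, a⁻¹, b, b⁻¹ preserves N
  have hA1 : ∀ n ∈ N, a⁻¹ * n * a ∈ N := by
    refine hconj_mem a ?_ ?_
    · have e : a⁻¹ * a ^ p * a = a ^ p := by group
      rw [e]; exact hxN
    · have h := hconjY 1
      rw [zpow_one] at h
      rw [h]; exact mul_mem hyN (Subgroup.zpow_mem N hcN _)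
  have hA2 : ∀ n ∈ N, a * n * a⁻¹ ∈ N := by
    intro n hn
    have h := hconj_mem a⁻¹ ?_ ?_ n hn
    · simpa using h
    · have e : (a⁻¹)⁻¹ * a ^ p * a⁻¹ = a ^ p := by group
      rw [e]; exact hxN
    · have h := hconjY (-1)
      rw [zpow_neg_one] at h
      rw [h]; exact mul_mem hyN (Subgroup.zpow_mem N hcN _)
  have hB1 : ∀ n ∈ N, b⁻¹ * n * b ∈ N := by
    refine hconj_mem b ?_ ?_
    · have h := hconjX 1
      rw [zpow_one] at h
      rw [h]; exact mul_mem hxN (Subgroup.zpow_mem N hcN _)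
    · have e : b⁻¹ * b ^ p * b = b ^ p := by group
      rw [e]; exact hyN
  have hB2 : ∀ n ∈ N, b * n * b⁻¹ ∈ N := by
    intro n hn
    have h := hconj_mem b⁻¹ ?_ ?_ n hn
    · simpa using h
    · have h := hconjX (-1)
      rw [zpow_neg_one] at h
      rw [h]; exact mul_mem hxN (Subgroup.zpow_mem N hcN _)
    · have e : (b⁻¹)⁻¹ * b ^ p * b⁻¹ = b ^ p := by group
      rw [e]; exact hyN
  -- normality
  have hnorm : N.Normal := by
    have key : ∀ g ∈ Subgroup.closure {a, b},
        (∀ n ∈ N, g⁻¹ * n * g ∈ N) ∧ (∀ n ∈ N, g * n * g⁻¹ ∈ N) := by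
      intro g hg
      induction hg using Subgroup.closure_induction with
      | mem z hz =>
        rcases hz with rfl | rfl
        · exact ⟨hA1, hA2⟩
        · exact ⟨hB1, hB2⟩
      | one => constructor <;> intro n hn <;> simpa using hn
      | mul u v hu hv ihu ihv =>
        constructor
        · intro n hn
          have h2 := ihv.1 _ (ihu.1 n hn)
          have e : v⁻¹ * (u⁻¹ * n * u) * v = (u * v)⁻¹ * n * (u * v) := by group
          rwa [e] at h2
        · intro n hn
          have h2 := ihu.2 _ (ihv.2 n hn)
          have e : u * (v * n * v⁻¹) * u⁻¹ = (u * v) * n * (u * v)⁻¹ := by group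
          rwa [e] at h2
      | inv u hu ihu =>
        exact ⟨fun n hn => by simpa using ihu.2 n hn,
          fun n hn => by simpa using ihu.1 n hn⟩
    exact ⟨fun n hn g => (key g (by rw [hgen]; trivial)).2 n hn⟩
  haveI := hnorm
  -- quotient facts
  have hsurj : Function.Surjective (QuotientGroup.mk' N) := QuotientGroup.mk'_surjective N
  have hABgen : Subgroup.closure {((a : Gt) : Gt ⧸ N), ((b : Gt) : Gt ⧸ N)} = ⊤ := by
    have himg : ({((a : Gt) : Gt ⧸ N), ((b : Gt) : Gt ⧸ N)} : Set (Gt ⧸ N))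
        = (QuotientGroup.mk' N) '' {a, b} := by
      simp [Set.image_insert_eq]
    rw [himg, ← MonoidHom.map_closure, hgen, Subgroup.map_top_of_surjective _ hsurj]
  have hABcomm : Commute ((a : Gt) : Gt ⧸ N) ((b : Gt) : Gt ⧸ N) := by
    show ((a : Gt) : Gt ⧸ N) * b = (b : Gt) * a
    rw [← QuotientGroup.mk_mul, ← QuotientGroup.mk_mul, QuotientGroup.eq]
    have e : (a * b)⁻¹ * (b * a) = c⁻¹ := by rw [← hrel1]; group
    rw [e]
    exact inv_mem hcN
  have hApow : ((a : Gt) : Gt ⧸ N) ^ p = 1 := by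
    rw [← QuotientGroup.mk_pow, QuotientGroup.eq_one_iff]; exact hxN
  have hBpow : ((b : Gt) : Gt ⧸ N) ^ p = 1 := by
    rw [← QuotientGroup.mk_pow, QuotientGroup.eq_one_iff]; exact hyN
  -- representation of arbitrary elements
  have hrepZ : ∀ g : Gt, ∃ i j : ℤ, ∃ m ∈ N, g = a ^ i * b ^ j * m := by
    intro g
    have hq : ((g : Gt) : Gt ⧸ N) ∈ Subgroup.closure
        {((a : Gt) : Gt ⧸ N), ((b : Gt) : Gt ⧸ N)} := by
      rw [hABgen]; trivial
    obtain ⟨i, j, hij⟩ := mem_closure_pair' hABcomm hq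
    refine ⟨i, j, (a ^ i * b ^ j)⁻¹ * g, ?_, by group⟩
    rw [← QuotientGroup.eq, hij]
    simp [QuotientGroup.mk_mul, QuotientGroup.mk_zpow]
  -- cardinality of the quotient
  have hQrep : ∀ q : Gt ⧸ N, ∃ r s : ℕ, r < p ∧ s < p ∧
      q = ((a : Gt) : Gt ⧸ N) ^ r * ((b : Gt) : Gt ⧸ N) ^ s := by
    intro q
    have hq : q ∈ Subgroup.closure {((a : Gt) : Gt ⧸ N), ((b : Gt) : Gt ⧸ N)} := by
      rw [hABgen]; trivial
    obtain ⟨i, j, rfl⟩ := mem_closure_pair' hABcomm hq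
    obtain ⟨r, hr, hre⟩ := zpow_reduce' hp.pos hApow i
    obtain ⟨s, hs, hse⟩ := zpow_reduce' hp.pos hBpow j
    exact ⟨r, s, hr, hs, by rw [hre, hse]⟩
  have hQcard : Nat.card (Gt ⧸ N) ≤ p ^ 2 := by
    have hsurj2 : Function.Surjective (fun z : Fin p × Fin p =>
        ((a : Gt) : Gt ⧸ N) ^ (z.1 : ℕ) * ((b : Gt) : Gt ⧸ N) ^ (z.2 : ℕ)) := by
      intro q
      obtain ⟨r, s, hr, hs, he⟩ := hQrep q
      exact ⟨(⟨r, hr⟩, ⟨s, hs⟩), he.symm⟩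
    calc Nat.card (Gt ⧸ N) ≤ Nat.card (Fin p × Fin p) :=
          Nat.card_le_card_of_surjective _ hsurj2
    _ = p ^ 2 := by simp [Nat.card_eq_fintype_card, pow_two]
  -- cardinality of N
  have hX3 : (a ^ p) ^ (p ^ 3) = 1 := by
    rw [← pow_mul]
    have e : p * p ^ 3 = p ^ 2 * p ^ 2 := by ring
    rw [e, pow_mul, hrel2, hrel4]
  have hY1 : (b ^ p) ^ p = 1 := by rw [← pow_mul, ← pow_two, hrel3]
  have hNrep : ∀ n ∈ N, ∃ r s : ℕ, r < p ^ 3 ∧ s < p ∧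
      n = (a ^ p) ^ r * (b ^ p) ^ s := by
    intro n hn
    rw [hNdef] at hn
    obtain ⟨i, j, rfl⟩ := mem_closure_pair' hxy hn
    obtain ⟨r, hr, hre⟩ := zpow_reduce' (pow_pos hp.pos 3) hX3 i
    obtain ⟨s, hs, hse⟩ := zpow_reduce' hp.pos hY1 j
    exact ⟨r, s, hr, hs, by rw [hre, hse]⟩
  have hNcard_le : Nat.card ↥N ≤ p ^ 4 := by
    have hsurj2 : Function.Surjective (fun z : Fin (p ^ 3) × Fin p =>
        (⟨(a ^ p) ^ (z.1 : ℕ) * (b ^ p) ^ (z.2 : ℕ),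
          mul_mem (pow_mem hxN _) (pow_mem hyN _)⟩ : ↥N)) := by
      rintro ⟨n, hn⟩
      obtain ⟨r, s, hr, hs, he⟩ := hNrep n hn
      exact ⟨(⟨r, hr⟩, ⟨s, hs⟩), Subtype.ext he.symm⟩
    calc Nat.card ↥N ≤ Nat.card (Fin (p ^ 3) × Fin p) :=
          Nat.card_le_card_of_surjective _ hsurj2
    _ = p ^ 4 := by
        simp only [Nat.card_eq_fintype_card, Fintype.card_prod, Fintype.card_fin]
        ring
  have hNcard : Nat.card ↥N = p ^ 4 := by
    have htot : Nat.card Gt = Nat.card (Gt ⧸ N) * Nat.card ↥N :=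
      Subgroup.card_eq_card_quotient_mul_card_subgroup N
    have h6 : p ^ 6 = Nat.card (Gt ⧸ N) * Nat.card ↥N := by
      rw [← htot, Nat.card_eq_fintype_card, hcard]
    have hge : p ^ 4 ≤ Nat.card ↥N := by
      have hle2 : Nat.card (Gt ⧸ N) * Nat.card ↥N ≤ p ^ 2 * Nat.card ↥N :=
        Nat.mul_le_mul_right _ hQcard
      have h66 : p ^ 2 * p ^ 4 ≤ p ^ 2 * Nat.card ↥N := by
        calc p ^ 2 * p ^ 4 = p ^ 6 := by ring
        _ = Nat.card (Gt ⧸ N) * Nat.card ↥N := h6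
        _ ≤ p ^ 2 * Nat.card ↥N := hle2
      exact Nat.le_of_mul_le_mul_left h66 (pow_pos hp.pos 2)
    exact le_antisymm hNcard_le hge
  refine ⟨hnorm, fun u v => Subtype.ext (hNc u u.2 v v.2), hNcard, fun g => ⟨?_, ?_⟩⟩
  · intro hg n h
    have hcomm : (n : Gt) * g = g * n := hNc n n.2 g hg
    have he : g⁻¹ * (n : Gt) * g = n := by rw [mul_assoc, hcomm]; group
    have : (⟨g⁻¹ * (n : Gt) * g, h⟩ : ↥N) = n := Subtype.ext he
    rw [this]
  · intro H
    obtain ⟨i, j, m, hm, rfl⟩ := hrepZ g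
    have hconjm : ∀ u ∈ N, m⁻¹ * u * m = u := by
      intro u hu
      have h := hNc u hu m hm
      rw [mul_assoc, h]; group
    -- conjugation computations
    have ht1 : (a ^ i * b ^ j * m)⁻¹ * a ^ p * (a ^ i * b ^ j * m)
        = a ^ p * c ^ ((p : ℤ) * j) := by
      have e0 : (a ^ i * b ^ j * m)⁻¹ * a ^ p * (a ^ i * b ^ j * m)
          = m⁻¹ * ((b ^ j)⁻¹ * ((a ^ i)⁻¹ * a ^ p * a ^ i) * b ^ j) * m := by group
      have e1 : (a ^ i)⁻¹ * a ^ p * a ^ i = a ^ p := by group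
      rw [e0, e1, hconjX j]
      exact hconjm _ (mul_mem hxN (Subgroup.zpow_mem N hcN _))
    have ht2 : (a ^ i * b ^ j * m)⁻¹ * b ^ p * (a ^ i * b ^ j * m)
        = b ^ p * c ^ (-((p : ℤ) * i)) := by
      have e0 : (a ^ i * b ^ j * m)⁻¹ * b ^ p * (a ^ i * b ^ j * m)
          = m⁻¹ * ((b ^ j)⁻¹ * ((a ^ i)⁻¹ * b ^ p * a ^ i) * b ^ j) * m := by group
      have e2 : (b ^ j)⁻¹ * (b ^ p * c ^ (-((p : ℤ) * i))) * b ^ j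
          = b ^ p * c ^ (-((p : ℤ) * i)) := by
        have hcc : c ^ (-((p : ℤ) * i)) * b ^ j = b ^ j * c ^ (-((p : ℤ) * i)) :=
          ((hcm b).zpow_zpow _ j)
        rw [mul_assoc, mul_assoc, hcc]
        group
      rw [e0, hconjY i, e2]
      exact hconjm _ (mul_mem hyN (Subgroup.zpow_mem N hcN _))
    -- set up subgroup elements
    have hCp : ((⟨c, hcN⟩ : ↥N) : ↥N) ^ p = (⟨a ^ (p ^ 3), hmem⟩ : ↥N) := by
      apply Subtype.ext
      show c ^ p = a ^ (p ^ 3)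
      rw [← hrel2, ← pow_mul, ← pow_succ]
    have hmem1 : (a ^ i * b ^ j * m)⁻¹ * a ^ p * (a ^ i * b ^ j * m) ∈ N := by
      rw [ht1]; exact mul_mem hxN (Subgroup.zpow_mem N hcN _)
    have hmem2 : (a ^ i * b ^ j * m)⁻¹ * b ^ p * (a ^ i * b ^ j * m) ∈ N := by
      rw [ht2]; exact mul_mem hyN (Subgroup.zpow_mem N hcN _)
    have heq1 : (⟨(a ^ i * b ^ j * m)⁻¹ * a ^ p * (a ^ i * b ^ j * m), hmem1⟩ : ↥N)
        = (⟨a ^ p, hxN⟩ : ↥N) * (⟨c, hcN⟩ : ↥N) ^ ((p : ℤ) * j) := by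
      apply Subtype.ext
      rw [Subgroup.coe_mul, SubgroupClass.coe_zpow]
      exact ht1
    have heq2 : (⟨(a ^ i * b ^ j * m)⁻¹ * b ^ p * (a ^ i * b ^ j * m), hmem2⟩ : ↥N)
        = (⟨b ^ p, hyN⟩ : ↥N) * (⟨c, hcN⟩ : ↥N) ^ (-((p : ℤ) * i)) := by
      apply Subtype.ext
      rw [Subgroup.coe_mul, SubgroupClass.coe_zpow]
      exact ht2
    have h1 : χ ⟨a ^ p, hxN⟩ * χ ⟨c, hcN⟩ ^ ((p : ℤ) * j) = χ ⟨a ^ p, hxN⟩ := by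
      calc χ ⟨a ^ p, hxN⟩ * χ ⟨c, hcN⟩ ^ ((p : ℤ) * j)
          = χ ((⟨a ^ p, hxN⟩ : ↥N) * (⟨c, hcN⟩ : ↥N) ^ ((p : ℤ) * j)) := by
            rw [map_mul, map_zpow]
      _ = χ ⟨(a ^ i * b ^ j * m)⁻¹ * a ^ p * (a ^ i * b ^ j * m), hmem1⟩ := by rw [heq1]
      _ = χ ⟨a ^ p, hxN⟩ := H ⟨a ^ p, hxN⟩ hmem1
    have h2 : χ ⟨b ^ p, hyN⟩ * χ ⟨c, hcN⟩ ^ (-((p : ℤ) * i)) = χ ⟨b ^ p, hyN⟩ := by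
      calc χ ⟨b ^ p, hyN⟩ * χ ⟨c, hcN⟩ ^ (-((p : ℤ) * i))
          = χ ((⟨b ^ p, hyN⟩ : ↥N) * (⟨c, hcN⟩ : ↥N) ^ (-((p : ℤ) * i))) := by
            rw [map_mul, map_zpow]
      _ = χ ⟨(a ^ i * b ^ j * m)⁻¹ * b ^ p * (a ^ i * b ^ j * m), hmem2⟩ := by rw [heq2]
      _ = χ ⟨b ^ p, hyN⟩ := H ⟨b ^ p, hyN⟩ hmem2
    have hu1 : χ ⟨c, hcN⟩ ^ ((p : ℤ) * j) = 1 := mul_eq_left.mp h1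
    have hu2 : χ ⟨c, hcN⟩ ^ ((p : ℤ) * i) = 1 := by
      have := mul_eq_left.mp h2
      rwa [zpow_neg, inv_eq_one] at this
    have hj : (p : ℤ) ∣ j := by
      have hz : (χ (⟨a ^ (p ^ 3), hmem⟩ : ↥N)) ^ j = 1 := by
        rw [← hCp, map_pow, ← zpow_natCast (χ ⟨c, hcN⟩) p, ← zpow_mul]
        exact hu1
      exact (hprim.zpow_eq_one_iff_dvd j).mp hz
    have hi : (p : ℤ) ∣ i := by
      have hz : (χ (⟨a ^ (p ^ 3), hmem⟩ : ↥N)) ^ i = 1 := by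
        rw [← hCp, map_pow, ← zpow_natCast (χ ⟨c, hcN⟩) p, ← zpow_mul]
        exact hu2
      exact (hprim.zpow_eq_one_iff_dvd i).mp hz
    obtain ⟨i', rfl⟩ := hi
    obtain ⟨j', rfl⟩ := hj
    refine mul_mem (mul_mem ?_ ?_) hm
    · rw [zpow_mul, zpow_natCast]
      exact Subgroup.zpow_mem N hxN i'
    · rw [zpow_mul, zpow_natCast]
      exact Subgroup.zpow_mem N hyN j'
end
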